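/- arXiv:1611.05679 — 5 statements merged into one kernel-verified Lean document; each statement's English description precedes it below -/
import Mathlib

section
/- Let Q be a key polynomial with ε := ε(Q). If f, g ∈ K[x] both have degree strictly less than deg(Q), then for every b ∈ ℕ, ν(∂_b(fg)) > ν(fg) - bε. -/
open Polynomial
open scoped Classical
noncomputable section

/-- `ν` is (the restriction to nonzero polynomials of) a valuation on `K[x]`,
nontrivial on `K`, with `ν(x) ≥ 0`.  Values are taken in a linearly ordered
field `Γ` (playing the role of the divisible hull of the value group). -/
structure IsVal {K : Type*} [Field K] {Γ : Type*} [Field Γ] [LinearOrder Γ] [IsStrictOrderedRing Γ]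
    (ν : Polynomial K → Γ) : Prop where
  map_mul : ∀ f g : Polynomial K, f ≠ 0 → g ≠ 0 → ν (f * g) = ν f + ν g
  map_add : ∀ f g : Polynomial K, f ≠ 0 → g ≠ 0 → f + g ≠ 0 →
    min (ν f) (ν g) ≤ ν (f + g)
  nontrivial : ∃ a : K, a ≠ 0 ∧ ν (C a) ≠ 0
  nonneg_x : 0 ≤ ν X

/-- `ε(f) = max_{b ≥ 1, ∂_b f ≠ 0} (ν(f) - ν(∂_b f))/b`, where `∂_b` is the
`b`-th formal (Hasse) derivative.  (Terms with `∂_b f = 0` correspond to the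
value `-∞` and are omitted from the maximum.) -/
noncomputable def eps {K : Type*} [Field K] {Γ : Type*} [Field Γ] [LinearOrder Γ] [IsStrictOrderedRing Γ]
    (ν : Polynomial K → Γ) (f : Polynomial K) : Γ :=
  if h : ((Finset.Icc 1 f.natDegree).filter
      fun b => Polynomial.hasseDeriv b f ≠ 0).Nonempty then
    ((Finset.Icc 1 f.natDegree).filter
      fun b => Polynomial.hasseDeriv b f ≠ 0).sup' h
      fun b => (ν f - ν (Polynomial.hasseDeriv b f)) / (b : Γ)
  else 0

/-- A monic (nonconstant) polynomial `Q` is a key polynomial for `ν` if every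
`f ∈ K[x]` with `ε(f) ≥ ε(Q)` satisfies `deg f ≥ deg Q`. -/
def IsKeyPol {K : Type*} [Field K] {Γ : Type*} [Field Γ] [LinearOrder Γ] [IsStrictOrderedRing Γ]
    (ν : Polynomial K → Γ) (Q : Polynomial K) : Prop :=
  Q.Monic ∧ 1 ≤ Q.natDegree ∧
    ∀ f : Polynomial K, 1 ≤ f.natDegree → eps ν Q ≤ eps ν f →
      Q.natDegree ≤ f.natDegree

/-- The `i`-th coefficient `f_i` of the `q`-standard expansion
`f = Σ f_i q^i` (each `f_i = 0` or `deg f_i < deg q`), for `q` monic. -/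
noncomputable def qCoeff {K : Type*} [Field K] (q f : Polynomial K) (i : ℕ) :
    Polynomial K :=
  (f /ₘ q ^ i) %ₘ q

/-- The `q`-truncation `ν_q(f) = min_i ν(f_i q^i)` of `ν`, the minimum taken
over the nonzero coefficients of the `q`-standard expansion of `f`. -/
noncomputable def truncVal {K : Type*} [Field K] {Γ : Type*}
    [Field Γ] [LinearOrder Γ] [IsStrictOrderedRing Γ] (ν : Polynomial K → Γ) (q f : Polynomial K) : Γ :=
  if h : ((Finset.range (f.natDegree + 1)).filter
      fun i => qCoeff q f i ≠ 0).Nonempty then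
    ((Finset.range (f.natDegree + 1)).filter
      fun i => qCoeff q f i ≠ 0).inf' h
      fun i => ν (qCoeff q f i * q ^ i)
  else 0

/-- `I(Q) = {b : (ν(Q) - ν(∂_b Q))/b = ε(Q)}`. -/
def Iset {K : Type*} [Field K] {Γ : Type*} [Field Γ] [LinearOrder Γ] [IsStrictOrderedRing Γ]
    (ν : Polynomial K → Γ) (Q : Polynomial K) : Set ℕ :=
  {b | 1 ≤ b ∧ Polynomial.hasseDeriv b Q ≠ 0 ∧
    (ν Q - ν (Polynomial.hasseDeriv b Q)) / (b : Γ) = eps ν Q}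

/-- `S_Q(f) = {i : ν(f_i Q^i) = ν_Q(f)}` (over nonzero coefficients). -/
def Sset {K : Type*} [Field K] {Γ : Type*} [Field Γ] [LinearOrder Γ] [IsStrictOrderedRing Γ]
    (ν : Polynomial K → Γ) (q f : Polynomial K) : Set ℕ :=
  {i | qCoeff q f i ≠ 0 ∧ ν (qCoeff q f i * q ^ i) = truncVal ν q f}


variable {K : Type*} [Field K] {Γ : Type*} [Field Γ] [LinearOrder Γ] [IsStrictOrderedRing Γ]

lemma val_sum_ge (ν : Polynomial K → Γ) (hν : IsVal ν) {ι : Type*}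
    (s : Finset ι) (F : ι → Polynomial K) (h : s.sum F ≠ 0) :
    ∃ i ∈ s, F i ≠ 0 ∧ ν (F i) ≤ ν (s.sum F) := by
  induction s using Finset.cons_induction with
  | empty => simp at h
  | cons a t ha ih =>
    rw [Finset.sum_cons] at h ⊢
    by_cases h1 : F a = 0
    · rw [h1, zero_add] at h ⊢
      obtain ⟨i, hi, h2, h3⟩ := ih h
      exact ⟨i, Finset.mem_cons_of_mem hi, h2, h3⟩
    by_cases h2 : t.sum F = 0
    · rw [h2, add_zero]
      exact ⟨a, Finset.mem_cons_self a t, h1, le_refl _⟩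
    · have hmin := hν.map_add _ _ h1 h2 h
      rcases le_total (ν (F a)) (ν (t.sum F)) with hle | hle
      · exact ⟨a, Finset.mem_cons_self a t, h1,
          le_trans (by simpa [min_eq_left hle] using hmin) (le_refl _)⟩
      · obtain ⟨i, hi, h3, h4⟩ := ih h2
        exact ⟨i, Finset.mem_cons_of_mem hi, h3,
          h4.trans (by simpa [min_eq_right hle] using hmin)⟩

lemma val_sub_le_eps (ν : Polynomial K → Γ) (f : Polynomial K) (j : ℕ)
    (hj : 1 ≤ j) (hd : Polynomial.hasseDeriv j f ≠ 0) :
    ν f - ν (Polynomial.hasseDeriv j f) ≤ (j : Γ) * eps ν f := by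
  have hjd : j ≤ f.natDegree := by
    by_contra hc
    exact hd (Polynomial.hasseDeriv_eq_zero_of_lt_natDegree f j (lt_of_not_ge hc))
  have hmem : j ∈ (Finset.Icc 1 f.natDegree).filter
      fun b => Polynomial.hasseDeriv b f ≠ 0 := by
    simp [Finset.mem_filter, Finset.mem_Icc, hj, hjd, hd]
  have hne : ((Finset.Icc 1 f.natDegree).filter
      fun b => Polynomial.hasseDeriv b f ≠ 0).Nonempty := ⟨j, hmem⟩
  have : (ν f - ν (Polynomial.hasseDeriv j f)) / (j : Γ) ≤ eps ν f := by
    rw [eps, dif_pos hne]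
    exact Finset.le_sup' (fun b => (ν f - ν (Polynomial.hasseDeriv b f)) / (b : Γ)) hmem
  have hjpos : (0 : Γ) < (j : Γ) := by exact_mod_cast hj
  calc ν f - ν (Polynomial.hasseDeriv j f)
      = (ν f - ν (Polynomial.hasseDeriv j f)) / (j : Γ) * (j : Γ) := by
        field_simp
    _ ≤ eps ν f * (j : Γ) := by
        exact mul_le_mul_of_nonneg_right this hjpos.le
    _ = (j : Γ) * eps ν f := mul_comm _ _

lemma eps_lt_of_deg_lt (ν : Polynomial K → Γ) (Q : Polynomial K)
    (hQ : IsKeyPol ν Q) (f : Polynomial K) (h1 : 1 ≤ f.natDegree)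
    (h2 : f.natDegree < Q.natDegree) : eps ν f < eps ν Q := by
  by_contra hc
  exact absurd (hQ.2.2 f h1 (le_of_not_gt hc)) (not_le_of_gt h2)

/-- Key per-factor estimate. -/
lemma factor_bound (ν : Polynomial K → Γ) (Q : Polynomial K)
    (hQ : IsKeyPol ν Q) (p : Polynomial K)
    (hdp : p.natDegree < Q.natDegree) (j : ℕ)
    (hd : Polynomial.hasseDeriv j p ≠ 0) :
    (ν p - (j : Γ) * eps ν Q ≤ ν (Polynomial.hasseDeriv j p)) ∧
      (1 ≤ j → ν p - (j : Γ) * eps ν Q < ν (Polynomial.hasseDeriv j p)) := by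
  rcases Nat.eq_zero_or_pos j with rfl | hj
  · constructor
    · simp [Polynomial.hasseDeriv_zero']
    · intro h; omega
  · have hp1 : 1 ≤ p.natDegree := by
      by_contra hc
      push_neg at hc
      interval_cases h : p.natDegree
      exact hd (Polynomial.hasseDeriv_eq_zero_of_lt_natDegree p j (by omega))
    have h1 := val_sub_le_eps ν p j hj hd
    have h2 := eps_lt_of_deg_lt ν Q hQ p hp1 hdp
    have hjpos : (0 : Γ) < (j : Γ) := by exact_mod_cast hj
    have : (j : Γ) * eps ν p < (j : Γ) * eps ν Q :=
      mul_lt_mul_of_pos_left h2 hjpos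
    constructor
    · linarith
    · intro _; linarith

/-- If `deg f, deg g < deg Q` for a key polynomial `Q`, then
`ν(∂_b (f g)) > ν(f g) - b ε(Q)` for every `b`. -/
theorem deriv_val_mul_gt (ν : Polynomial K → Γ) (hν : IsVal ν)
    (Q : Polynomial K) (hQ : IsKeyPol ν Q) (f g : Polynomial K)
    (hf : f ≠ 0) (hg : g ≠ 0)
    (hdf : f.natDegree < Q.natDegree) (hdg : g.natDegree < Q.natDegree)
    (b : ℕ) (hb : 1 ≤ b) (hder : Polynomial.hasseDeriv b (f * g) ≠ 0) :
    ν (f * g) - (b : Γ) * eps ν Q < ν (Polynomial.hasseDeriv b (f * g)) := by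
  have hexp := Polynomial.hasseDeriv_mul b f g
  rw [hexp] at hder ⊢
  obtain ⟨ij, hij, hne, hle⟩ := val_sum_ge ν hν _ _ hder
  rw [Finset.HasAntidiagonal.mem_antidiagonal] at hij
  obtain ⟨j, k⟩ := ij
  simp only at hne hle hij
  have hjf : Polynomial.hasseDeriv j f ≠ 0 := left_ne_zero_of_mul hne
  have hkg : Polynomial.hasseDeriv k g ≠ 0 := right_ne_zero_of_mul hne
  have hmul : ν (Polynomial.hasseDeriv j f * Polynomial.hasseDeriv k g)
      = ν (Polynomial.hasseDeriv j f) + ν (Polynomial.hasseDeriv k g) :=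
    hν.map_mul _ _ hjf hkg
  have hfg : ν (f * g) = ν f + ν g := hν.map_mul f g hf hg
  have hF := factor_bound ν Q hQ f hdf j hjf
  have hG := factor_bound ν Q hQ g hdg k hkg
  have hbsum : (b : Γ) = (j : Γ) + (k : Γ) := by
    rw [← hij]; push_cast; ring
  have hstrict : ν f + ν g - (b : Γ) * eps ν Q
      < ν (Polynomial.hasseDeriv j f) + ν (Polynomial.hasseDeriv k g) := by
    rcases Nat.eq_zero_or_pos j with rfl | hj
    · have hk : 1 ≤ k := by omega
      have h1 := hG.2 hk
      have h2 := hF.1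
      rw [hbsum]
      push_cast at h1 h2 ⊢
      linarith
    · have := hF.2 hj
      have := hG.1
      rw [hbsum]; linarith
  rw [hfg]
  calc ν f + ν g - (b : Γ) * eps ν Q
      < ν (Polynomial.hasseDeriv j f) + ν (Polynomial.hasseDeriv k g) := hstrict
    _ = ν (Polynomial.hasseDeriv j f * Polynomial.hasseDeriv k g) := hmul.symm
    _ ≤ _ := hle
end
end

section
/- Let Q be a key polynomial with ε := ε(Q), let I(Q) = {b ∈ ℕ : (ν(Q)-ν(∂_b Q))/b = ε}, and let f, g ∈ K[x] with deg(f), deg(g) < deg(Q). If ν_Q(fQ+g) < ν(fQ+g) and b ∈ I(Q), then ν(∂_b(fQ+g)) = ν(fQ) - bε. -/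
open Polynomial
open scoped Classical
noncomputable section

variable {K : Type*} [Field K] {Γ : Type*} [Field Γ] [LinearOrder Γ] [IsStrictOrderedRing Γ]

section AuxLemmas

variable {K : Type*} [Field K] {Γ : Type*} [Field Γ] [LinearOrder Γ] [IsStrictOrderedRing Γ]
variable {ν : Polynomial K → Γ}

lemma IsVal.val_one (hν : IsVal ν) : ν (1 : Polynomial K) = 0 := by
  have h := hν.map_mul 1 1 one_ne_zero one_ne_zero
  rw [one_mul] at h; linarith

lemma IsVal.val_neg (hν : IsVal ν) {u : Polynomial K} (hu : u ≠ 0) : ν (-u) = ν u := by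
  have h1 : ν ((-1 : Polynomial K) * (-1)) = ν (-1 : Polynomial K) + ν (-1 : Polynomial K) :=
    hν.map_mul _ _ (by norm_num) (by norm_num)
  rw [neg_mul_neg, one_mul, hν.val_one] at h1
  have hm : ν (-1 : Polynomial K) = 0 := by linarith
  have h2 := hν.map_mul (-1) u (by norm_num) hu
  rw [neg_one_mul] at h2
  rw [h2, hm, zero_add]

/-- If `ν u < ν v` (or `v = 0`) then `u + v ≠ 0` and `ν (u+v) = ν u`. -/
lemma IsVal.val_add_left (hν : IsVal ν) {u v : Polynomial K} (hu : u ≠ 0)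
    (hv : v = 0 ∨ (v ≠ 0 ∧ ν u < ν v)) : u + v ≠ 0 ∧ ν (u + v) = ν u := by
  rcases hv with rfl | ⟨hv, hlt⟩
  · simpa using hu
  · have hne : u + v ≠ 0 := by
      intro h0
      have hvu : v = -u := by linear_combination h0
      rw [hvu, hν.val_neg hu] at hlt
      exact lt_irrefl _ hlt
    refine ⟨hne, le_antisymm ?_ ?_⟩
    · have h2 := hν.map_add (u + v) (-v) hne (neg_ne_zero.2 hv) (by simpa using hu)
      rw [add_neg_cancel_right, hν.val_neg hv] at h2
      rcases min_le_iff.1 h2 with h | h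
      · exact h
      · exact absurd h (not_le.2 hlt)
    · have h1 := hν.map_add u v hu hv hne
      rw [min_eq_left hlt.le] at h1
      exact h1

lemma IsVal.val_add_cases (hν : IsVal ν) {u v : Polynomial K} {c : Γ}
    (hu : u = 0 ∨ (u ≠ 0 ∧ c < ν u)) (hv : v = 0 ∨ (v ≠ 0 ∧ c < ν v)) :
    u + v = 0 ∨ (u + v ≠ 0 ∧ c < ν (u + v)) := by
  rcases hu with rfl | ⟨hu, hcu⟩
  · simpa using hv
  rcases hv with rfl | ⟨hv, hcv⟩
  · simpa using Or.inr ⟨hu, hcu⟩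
  by_cases h0 : u + v = 0
  · exact Or.inl h0
  · refine Or.inr ⟨h0, lt_of_lt_of_le (lt_min hcu hcv) (hν.map_add u v hu hv h0)⟩

lemma IsVal.val_sum_cases (hν : IsVal ν) {ι : Type*} (s : Finset ι)
    (p : ι → Polynomial K) {c : Γ}
    (h : ∀ i ∈ s, p i = 0 ∨ (p i ≠ 0 ∧ c < ν (p i))) :
    (∑ i ∈ s, p i) = 0 ∨ ((∑ i ∈ s, p i) ≠ 0 ∧ c < ν (∑ i ∈ s, p i)) := by
  classical
  induction s using Finset.cons_induction with
  | empty => simp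
  | cons a s ha ih =>
    rw [Finset.sum_cons]
    exact hν.val_add_cases (h a (Finset.mem_cons_self a s))
      (ih fun i hi => h i (Finset.mem_cons_of_mem hi))

lemma hasseDeriv_ne_zero_le {p : Polynomial K} {j : ℕ}
    (h : Polynomial.hasseDeriv j p ≠ 0) : j ≤ p.natDegree := by
  by_contra hc
  exact h (Polynomial.hasseDeriv_eq_zero_of_lt_natDegree p j (not_le.1 hc))

lemma le_eps {p : Polynomial K} {j : ℕ} (hj : 1 ≤ j)
    (hd : Polynomial.hasseDeriv j p ≠ 0) :
    (ν p - ν (Polynomial.hasseDeriv j p)) / (j : Γ) ≤ eps ν p := by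
  have hmem : j ∈ (Finset.Icc 1 p.natDegree).filter
      (fun b => Polynomial.hasseDeriv b p ≠ 0) :=
    Finset.mem_filter.2 ⟨Finset.mem_Icc.2 ⟨hj, hasseDeriv_ne_zero_le hd⟩, hd⟩
  rw [eps, dif_pos ⟨j, hmem⟩]
  exact Finset.le_sup' (fun b => (ν p - ν (Polynomial.hasseDeriv b p)) / (b : Γ)) hmem

/-- For `deg p < deg Q` (Q a key polynomial), `ν(∂_j p) > ν(p) - j ε(Q)`. -/
lemma small_deg_bound {Q : Polynomial K} (hQ : IsKeyPol ν Q) {p : Polynomial K}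
    (hdp : p.natDegree < Q.natDegree) {j : ℕ} (hj : 1 ≤ j)
    (hd : Polynomial.hasseDeriv j p ≠ 0) :
    ν p - (j : Γ) * eps ν Q < ν (Polynomial.hasseDeriv j p) := by
  have h1 : 1 ≤ p.natDegree := le_trans hj (hasseDeriv_ne_zero_le hd)
  have heps : eps ν p < eps ν Q := by
    by_contra hc
    exact absurd (hQ.2.2 p h1 (not_lt.1 hc)) (not_le.2 hdp)
  have hle := le_eps (ν := ν) hj hd
  have hjpos : (0 : Γ) < (j : Γ) := by exact_mod_cast hj
  have := lt_of_le_of_lt hle heps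
  rw [div_lt_iff₀ hjpos] at this
  linarith [this]

/-- For `Q` itself: `ν(∂_j Q) ≥ ν(Q) - j ε(Q)`. -/
lemma Q_deriv_bound {Q : Polynomial K} {j : ℕ} (hj : 1 ≤ j)
    (hd : Polynomial.hasseDeriv j Q ≠ 0) :
    ν Q - (j : Γ) * eps ν Q ≤ ν (Polynomial.hasseDeriv j Q) := by
  have hle := le_eps (ν := ν) hj hd
  have hjpos : (0 : Γ) < (j : Γ) := by exact_mod_cast hj
  rw [div_le_iff₀ hjpos] at hle
  linarith [hle]

end AuxLemmas

/-- If `deg f, deg g < deg Q`, `ν_Q(fQ + g) < ν(fQ + g)` and `b ∈ I(Q)`, then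
`ν(∂_b (fQ + g)) = ν(fQ) - b ε(Q)`. -/
theorem deriv_val_of_trunc_lt (ν : Polynomial K → Γ) (hν : IsVal ν)
    (Q : Polynomial K) (hQ : IsKeyPol ν Q) (f g : Polynomial K) (hf : f ≠ 0)
    (hdf : f.natDegree < Q.natDegree) (hdg : g.natDegree < Q.natDegree)
    (htr : truncVal ν Q (f * Q + g) < ν (f * Q + g))
    (b : ℕ) (hb : b ∈ Iset ν Q) :
    Polynomial.hasseDeriv b (f * Q + g) ≠ 0 ∧
      ν (Polynomial.hasseDeriv b (f * Q + g)) = ν (f * Q) - (b : Γ) * eps ν Q := by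
  have hQm : Q.Monic := hQ.1
  have hd1 : 1 ≤ Q.natDegree := hQ.2.1
  obtain ⟨hb1, hbne, hbeq⟩ := hb
  have hQne : Q ≠ 0 := hQm.ne_zero
  have hfQne : f * Q ≠ 0 := mul_ne_zero hf hQne
  have hfQdeg : (f * Q).natDegree = f.natDegree + Q.natDegree :=
    Polynomial.natDegree_mul hf hQne
  have hgfQ : g.natDegree < (f * Q).natDegree := by rw [hfQdeg]; omega
  have hhdeg : (f * Q + g).natDegree = f.natDegree + Q.natDegree := by
    rw [Polynomial.natDegree_add_eq_left_of_natDegree_lt hgfQ, hfQdeg]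
  have hhne : f * Q + g ≠ 0 := by
    apply Polynomial.ne_zero_of_natDegree_gt (n := 0); omega
  have hdm : (f * Q + g) /ₘ Q = f ∧ (f * Q + g) %ₘ Q = g :=
    Polynomial.div_modByMonic_unique f g hQm
      ⟨by ring, Polynomial.degree_lt_degree hdg⟩
  have qC0 : qCoeff Q (f * Q + g) 0 = g := by
    unfold qCoeff
    rw [pow_zero, Polynomial.divByMonic_one, hdm.2]
  have qC1 : qCoeff Q (f * Q + g) 1 = f := by
    unfold qCoeff
    rw [pow_one, hdm.1]
    exact (Polynomial.modByMonic_eq_self_iff hQm).2 (Polynomial.degree_lt_degree hdf)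
  have qC2 : ∀ i, 2 ≤ i → qCoeff Q (f * Q + g) i = 0 := by
    intro i hi
    unfold qCoeff
    have hz : (f * Q + g) /ₘ Q ^ i = 0 := by
      rw [Polynomial.divByMonic_eq_zero_iff (hQm.pow i)]
      apply Polynomial.degree_lt_degree
      rw [hhdeg, hQm.natDegree_pow]
      have h2i : 2 * Q.natDegree ≤ i * Q.natDegree :=
        Nat.mul_le_mul_right Q.natDegree hi
      omega
    rw [hz, Polynomial.zero_modByMonic]
  have h1mem : 1 ∈ (Finset.range ((f * Q + g).natDegree + 1)).filter
      fun i => qCoeff Q (f * Q + g) i ≠ 0 := by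
    refine Finset.mem_filter.2 ⟨Finset.mem_range.2 (by omega), ?_⟩
    rw [qC1]; exact hf
  have hFne : ((Finset.range ((f * Q + g).natDegree + 1)).filter
      fun i => qCoeff Q (f * Q + g) i ≠ 0).Nonempty := ⟨1, h1mem⟩
  have hub : truncVal ν Q (f * Q + g) ≤ ν (f * Q) := by
    unfold truncVal
    rw [dif_pos hFne]
    refine le_trans (Finset.inf'_le _ h1mem) ?_
    rw [qC1, pow_one]
  have hlb : ∀ x : Γ, (g ≠ 0 → x ≤ ν g) → x ≤ ν (f * Q) →
      x ≤ truncVal ν Q (f * Q + g) := by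
    intro x hx1 hx2
    unfold truncVal
    rw [dif_pos hFne]
    refine Finset.le_inf' _ _ ?_
    intro i hi
    obtain ⟨-, hi2⟩ := Finset.mem_filter.1 hi
    match i with
    | 0 =>
      rw [qC0] at hi2 ⊢
      rw [pow_zero, mul_one]
      exact hx1 hi2
    | 1 =>
      rw [qC1, pow_one]
      exact hx2
    | (n+2) =>
      exact absurd (qC2 (n+2) (by omega)) hi2
  have hgne : g ≠ 0 := by
    intro hg0
    subst hg0
    have h1 : ν (f * Q) ≤ truncVal ν Q (f * Q + 0) :=
      hlb (ν (f * Q)) (fun hg => absurd rfl hg) le_rfl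
    simp only [add_zero] at h1 htr
    exact absurd htr (not_lt.2 h1)
  have hνg : ν g = ν (f * Q) := by
    rcases lt_trichotomy (ν g) (ν (f * Q)) with hlt | heq | hgt
    · exfalso
      have hadd := hν.val_add_left hgne (Or.inr ⟨hfQne, hlt⟩)
      have hcomm : g + f * Q = f * Q + g := by ring
      rw [hcomm] at hadd
      have h1 := hlb (ν g) (fun _ => le_rfl) hlt.le
      rw [hadd.2] at htr
      exact absurd htr (not_lt.2 h1)
    · exact heq
    · exfalso
      have hadd := hν.val_add_left hfQne (Or.inr ⟨hgne, hgt⟩)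
      have h1 := hlb (ν (f * Q)) (fun _ => hgt.le) le_rfl
      rw [hadd.2] at htr
      exact absurd htr (not_lt.2 h1)
  -- now the derivative computation
  have hbpos : (0 : Γ) < (b : Γ) := by exact_mod_cast hb1
  have hbQ : ν (Polynomial.hasseDeriv b Q) = ν Q - (b : Γ) * eps ν Q := by
    rw [div_eq_iff hbpos.ne'] at hbeq
    linarith
  have hune : f * Polynomial.hasseDeriv b Q ≠ 0 := mul_ne_zero hf hbne
  have hνu : ν (f * Polynomial.hasseDeriv b Q) = ν (f * Q) - (b : Γ) * eps ν Q := by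
    rw [hν.map_mul f _ hf hbne, hbQ, hν.map_mul f Q hf hQne]
    ring
  have hmem0b : ((0 : ℕ), b) ∈ Finset.HasAntidiagonal.antidiagonal b := by simp
  have hsplit : Polynomial.hasseDeriv b (f * Q + g) =
      f * Polynomial.hasseDeriv b Q +
      ((∑ ij ∈ (Finset.HasAntidiagonal.antidiagonal b).erase (0, b),
          Polynomial.hasseDeriv ij.1 f * Polynomial.hasseDeriv ij.2 Q) +
        Polynomial.hasseDeriv b g) := by
    rw [map_add, Polynomial.hasseDeriv_mul,
      ← Finset.add_sum_erase _ _ hmem0b, Polynomial.hasseDeriv_zero', add_assoc]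
  have hrest : ∀ ij ∈ (Finset.HasAntidiagonal.antidiagonal b).erase (0, b),
      Polynomial.hasseDeriv ij.1 f * Polynomial.hasseDeriv ij.2 Q = 0 ∨
      (Polynomial.hasseDeriv ij.1 f * Polynomial.hasseDeriv ij.2 Q ≠ 0 ∧
        ν (f * Q) - (b : Γ) * eps ν Q <
          ν (Polynomial.hasseDeriv ij.1 f * Polynomial.hasseDeriv ij.2 Q)) := by
    rintro ⟨i, j⟩ hij
    obtain ⟨hne, hmem⟩ := Finset.mem_erase.1 hij
    have hijb : i + j = b := Finset.HasAntidiagonal.mem_antidiagonal.1 hmem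
    have hi1 : 1 ≤ i := by
      rcases Nat.eq_zero_or_pos i with rfl | h
      · exfalso; apply hne; rw [Prod.mk.injEq]; omega
      · exact h
    by_cases hfi : Polynomial.hasseDeriv i f = 0
    · left; rw [hfi, zero_mul]
    by_cases hQj : Polynomial.hasseDeriv j Q = 0
    · left; rw [hQj, mul_zero]
    right
    refine ⟨mul_ne_zero hfi hQj, ?_⟩
    have hbf := small_deg_bound hQ hdf hi1 hfi
    have hbQ' : ν Q - (j : Γ) * eps ν Q ≤ ν (Polynomial.hasseDeriv j Q) := by
      rcases Nat.eq_zero_or_pos j with rfl | hj1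
      · rw [Polynomial.hasseDeriv_zero']
        simp
      · exact Q_deriv_bound hj1 hQj
    rw [hν.map_mul _ _ hfi hQj, hν.map_mul f Q hf hQne]
    have hcast : (i : Γ) + (j : Γ) = (b : Γ) := by exact_mod_cast congrArg Nat.cast hijb
    have hmulsplit : (b : Γ) * eps ν Q = (i : Γ) * eps ν Q + (j : Γ) * eps ν Q := by
      rw [← hcast]; ring
    linarith
  have hbg : Polynomial.hasseDeriv b g = 0 ∨
      (Polynomial.hasseDeriv b g ≠ 0 ∧
        ν (f * Q) - (b : Γ) * eps ν Q < ν (Polynomial.hasseDeriv b g)) := by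
    by_cases h0 : Polynomial.hasseDeriv b g = 0
    · exact Or.inl h0
    · refine Or.inr ⟨h0, ?_⟩
      have h1 := small_deg_bound hQ hdg hb1 h0
      rw [hνg] at h1
      exact h1
  have hv := hν.val_add_cases
    (hν.val_sum_cases ((Finset.HasAntidiagonal.antidiagonal b).erase (0, b))
      (fun ij => Polynomial.hasseDeriv ij.1 f * Polynomial.hasseDeriv ij.2 Q) hrest)
    hbg
  have hfinal := hν.val_add_left hune (by
    rcases hv with h0 | ⟨hne', hlt'⟩
    · exact Or.inl h0
    · exact Or.inr ⟨hne', by rw [hνu]; exact hlt'⟩)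
  rw [hsplit]
  exact ⟨hfinal.1, by rw [hfinal.2, hνu]⟩
end
end

section
/- There exist a field K, a valuation ν on K[x], and a monic polynomial q ∈ K[x] such that the q-truncation ν_q is not a valuation. Concretely: if ν(x) = ν(a) = 1 for some a ∈ K and q(x) = x² + 1, then ν_q(x² - a²) = 0 while ν_q(x-a) + ν_q(x+a) ≥ 2, so ν_q((x-a)(x+a)) ≠ ν_q(x-a) + ν_q(x+a). -/
open Polynomial
open scoped Classical
noncomputable section

variable {K : Type*} [Field K] {Γ : Type*} [Field Γ] [LinearOrder Γ] [IsStrictOrderedRing Γ]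

/-- The truncation `ν_q` need not be a valuation: if `ν(x) = ν(a) = 1` and
`q = x² + 1`, then `ν_q(x² - a²) = 0` while `ν_q(x - a) + ν_q(x + a) ≥ 2`, so
`ν_q((x - a)(x + a)) ≠ ν_q(x - a) + ν_q(x + a)`. -/
theorem trunc_not_valuation (ν : Polynomial K → Γ) (hν : IsVal ν)
    (a : K) (ha0 : a ≠ 0) (hx : ν X = 1) (ha : ν (C a) = 1) :
    truncVal ν (X ^ 2 + 1) (X ^ 2 - C (a ^ 2)) = 0 ∧
    (2 : Γ) ≤ truncVal ν (X ^ 2 + 1) (X - C a) +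
      truncVal ν (X ^ 2 + 1) (X + C a) ∧
    truncVal ν (X ^ 2 + 1) ((X - C a) * (X + C a)) ≠
      truncVal ν (X ^ 2 + 1) (X - C a) + truncVal ν (X ^ 2 + 1) (X + C a) := by
  set q : Polynomial K := X ^ 2 + 1 with hqdef
  have hqm : q.Monic := monic_X_pow_add (by
    rw [degree_one]; exact_mod_cast Nat.cast_lt.mpr (by norm_num : 0 < 2))
  have hq_deg : q.degree = 2 := by
    rw [hqdef, ← C_1]
    exact degree_X_pow_add_C (by norm_num) 1
  -- basic facts about ν
  have ν1 : ν (1 : Polynomial K) = 0 := by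
    have := hν.map_mul 1 1 one_ne_zero one_ne_zero
    rw [mul_one] at this; linarith
  have νneg : ∀ f : Polynomial K, f ≠ 0 → ν (-f) = ν f := by
    have hm1 : ν (-1 : Polynomial K) = 0 := by
      have := hν.map_mul (-1) (-1) (neg_ne_zero.2 one_ne_zero) (neg_ne_zero.2 one_ne_zero)
      rw [neg_mul_neg, one_mul, ν1] at this; linarith
    intro f hf
    have := hν.map_mul (-1) f (neg_ne_zero.2 one_ne_zero) hf
    rw [neg_one_mul, hm1, zero_add] at this
    exact this
  have addlt : ∀ f g : Polynomial K, f ≠ 0 → g ≠ 0 → ν f < ν g →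
      f + g ≠ 0 ∧ ν (f + g) = ν f := by
    intro f g hf hg hlt
    have hne : f + g ≠ 0 := by
      intro h
      have hfg : f = -g := eq_neg_of_add_eq_zero_left h
      rw [hfg, νneg g hg] at hlt
      exact lt_irrefl _ hlt
    refine ⟨hne, ?_⟩
    have h1 : min (ν f) (ν g) ≤ ν (f + g) := hν.map_add f g hf hg hne
    rw [min_eq_left hlt.le] at h1
    have hsum : (f + g) + (-g) = f := by ring
    have h3 : min (ν (f + g)) (ν (-g)) ≤ ν f := by
      have := hν.map_add (f + g) (-g) hne (neg_ne_zero.2 hg) (by rw [hsum]; exact hf)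
      rwa [hsum] at this
    rw [νneg g hg] at h3
    rcases le_or_gt (ν (f + g)) (ν g) with h | h
    · rw [min_eq_left h] at h3
      linarith
    · rw [min_eq_right h.le] at h3
      linarith
  have νX2 : ν (X ^ 2 : Polynomial K) = 2 := by
    have := hν.map_mul X X X_ne_zero X_ne_zero
    rw [← sq] at this
    rw [this, hx]; ring
  have νCa2 : ν (C (a ^ 2)) = 2 := by
    have := hν.map_mul (C a) (C a) (by simpa using ha0) (by simpa using ha0)
    rw [← C_mul, ← sq] at this
    rw [this, ha]; ring
  have htwo : (0 : Γ) < 2 := by norm_num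
  have νq : ν q = 0 := by
    have h := addlt 1 (X ^ 2) one_ne_zero (pow_ne_zero 2 X_ne_zero) (by rw [ν1, νX2]; norm_num)
    rw [hqdef, add_comm, h.2, ν1]
  -- the constant c
  set c : Polynomial K := C (-(a ^ 2) - 1) with hcdef
  have hcval : c = X ^ 2 - C (a ^ 2) - q := by
    rw [hcdef, hqdef, map_sub, map_neg, map_one]; ring
  have hc : 1 + C (a ^ 2) ≠ 0 ∧ ν (1 + C (a ^ 2)) = 0 := by
    have := addlt 1 (C (a ^ 2)) one_ne_zero (by simpa using pow_ne_zero 2 ha0)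
      (by rw [ν1, νCa2]; norm_num)
    rw [ν1] at this; exact this
  have hc0 : c ≠ 0 := by
    rw [hcdef]
    intro h
    rw [C_eq_zero] at h
    apply hc.1
    have ha2 : a ^ 2 = -1 := by linear_combination -h
    rw [ha2]; simp
  have νc : ν c = 0 := by
    have hc' : c = -(1 + C (a ^ 2)) := by rw [hcdef]; rw [map_sub, map_neg, map_one]; ring
    rw [hc', νneg _ hc.1, hc.2]
  -- qCoeff for f1 = X^2 - C(a^2)
  set f1 : Polynomial K := X ^ 2 - C (a ^ 2) with hf1def
  have hdm : f1 /ₘ q = 1 ∧ f1 %ₘ q = c :=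
    div_modByMonic_unique 1 c hqm ⟨by rw [hcval]; ring,
      lt_of_le_of_lt (degree_C_le) (by rw [hq_deg]; exact_mod_cast Nat.cast_lt.mpr (by norm_num : 0 < 2))⟩
  have hqc0 : qCoeff q f1 0 = c := by
    rw [qCoeff, pow_zero, divByMonic_one, hdm.2]
  have hqc1 : qCoeff q f1 1 = 1 := by
    rw [qCoeff, pow_one, hdm.1]
    exact (modByMonic_eq_self_iff hqm).2
      (by rw [degree_one, hq_deg]; exact_mod_cast Nat.cast_lt.mpr (by norm_num : 0 < 2))
  have hf1ndeg : f1.natDegree = 2 := natDegree_X_pow_sub_C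
  have htv1 : truncVal ν q f1 = 0 := by
    have hmem : 0 ∈ (Finset.range (f1.natDegree + 1)).filter fun i => qCoeff q f1 i ≠ 0 := by
      simp [hqc0, hc0]
    rw [truncVal, dif_pos ⟨0, hmem⟩]
    apply le_antisymm
    · have h := Finset.inf'_le (fun i => ν (qCoeff q f1 i * q ^ i)) hmem
      rw [hqc0, pow_zero, mul_one, νc] at h
      exact h
    · apply Finset.le_inf'
      intro i hi
      simp only [Finset.mem_filter, Finset.mem_range, hf1ndeg] at hi
      obtain ⟨hi1, hi2⟩ := hi
      interval_cases i
      · rw [hqc0, pow_zero, mul_one, νc]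
      · rw [hqc1, pow_one, one_mul, νq]
      · exact absurd (by rw [qCoeff, (divByMonic_eq_zero_iff (hqm.pow 2)).2 (by
            rw [degree_eq_natDegree (X_pow_sub_C_ne_zero (by norm_num) (a ^ 2) : f1 ≠ 0),
              hf1ndeg, degree_pow, hq_deg]
            decide), zero_modByMonic])
          hi2
  -- degree-1 polynomials
  have key1 : ∀ p : Polynomial K, p.degree = 1 → truncVal ν q p = ν p := by
    intro p hp
    have hp0 : p ≠ 0 := fun h => by rw [h, degree_zero] at hp; exact absurd hp (by decide)
    have hpn : p.natDegree = 1 := natDegree_eq_of_degree_eq_some hp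
    have hq0 : qCoeff q p 0 = p := by
      rw [qCoeff, pow_zero, divByMonic_one]
      exact (modByMonic_eq_self_iff hqm).2
        (by rw [hp, hq_deg]; exact_mod_cast Nat.cast_lt.mpr (by norm_num : 1 < 2))
    have hq1 : qCoeff q p 1 = 0 := by
      rw [qCoeff, pow_one, (divByMonic_eq_zero_iff hqm).2
        (by rw [hp, hq_deg]; exact_mod_cast Nat.cast_lt.mpr (by norm_num : 1 < 2)),
        zero_modByMonic]
    have hmem : 0 ∈ (Finset.range (p.natDegree + 1)).filter fun i => qCoeff q p i ≠ 0 := by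
      simp [hq0, hp0]
    rw [truncVal, dif_pos ⟨0, hmem⟩]
    apply le_antisymm
    · have h := Finset.inf'_le (fun i => ν (qCoeff q p i * q ^ i)) hmem
      rwa [hq0, pow_zero, mul_one] at h
    · apply Finset.le_inf'
      intro i hi
      simp only [Finset.mem_filter, Finset.mem_range, hpn] at hi
      obtain ⟨hi1, hi2⟩ := hi
      interval_cases i
      · rw [hq0, pow_zero, mul_one]
      · exact absurd hq1 hi2
  have hCa : (C a : Polynomial K) ≠ 0 := by simpa using ha0
  have hsub0 : (X - C a : Polynomial K) ≠ 0 := X_sub_C_ne_zero a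
  have hadd0 : (X + C a : Polynomial K) ≠ 0 := by
    have : (X + C a : Polynomial K).degree = 1 := degree_X_add_C a
    intro h; rw [h, degree_zero] at this; exact absurd this (by decide)
  have νsub : 1 ≤ ν (X - C a) := by
    have h := hν.map_add X (-C a) X_ne_zero (neg_ne_zero.2 hCa)
      (by rw [← sub_eq_add_neg]; exact hsub0)
    rw [← sub_eq_add_neg, νneg _ hCa, hx, ha, min_self] at h
    exact h
  have νadd : 1 ≤ ν (X + C a) := by
    have h := hν.map_add X (C a) X_ne_zero hCa hadd0
    rw [hx, ha, min_self] at h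
    exact h
  have htsub : truncVal ν q (X - C a) = ν (X - C a) := key1 _ (degree_X_sub_C a)
  have htadd : truncVal ν q (X + C a) = ν (X + C a) := key1 _ (degree_X_add_C a)
  have hprod : (X - C a) * (X + C a) = f1 := by rw [hf1def, C_pow]; ring
  refine ⟨htv1, ?_, ?_⟩
  · rw [htsub, htadd]; linarith
  · rw [hprod, htv1, htsub, htadd]
    intro h
    have : (2 : Γ) ≤ 0 := h ▸ (by linarith : (2:Γ) ≤ ν (X - C a) + ν (X + C a))
    linarith
end
end

section
/- If Q is a key polynomial for ν, then the Q-truncation ν_Q is a valuation on K[x]; in particular ν_Q(fg) = ν_Q(f) + ν_Q(g) and ν_Q(f+g) ≥ min{ν_Q(f), ν_Q(g)} for all f, g ∈ K[x]. -/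
open Polynomial
open scoped Classical
noncomputable section

namespace TruncAux

variable {K : Type*} [Field K] {Γ : Type*} [Field Γ] [LinearOrder Γ] [IsStrictOrderedRing Γ]
variable {ν : Polynomial K → Γ} {Q : Polynomial K}

theorem nu_one (hν : IsVal ν) : ν 1 = 0 := by
  have := hν.map_mul 1 1 one_ne_zero one_ne_zero
  rw [mul_one] at this
  linarith

theorem nu_neg (hν : IsVal ν) (p : Polynomial K) : ν (-p) = ν p := by
  rcases eq_or_ne p 0 with rfl | hp
  · simp
  have hm1 : (C (-1) : Polynomial K) ≠ 0 := by
    simp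
  have h1 : ν ((C (-1) : Polynomial K) * C (-1)) = ν (C (-1) : Polynomial K) + ν (C (-1) : Polynomial K) :=
    hν.map_mul _ _ hm1 hm1
  have h2 : (C (-1) : Polynomial K) * C (-1) = 1 := by
    rw [← C_mul]; norm_num
  rw [h2, nu_one hν] at h1
  have h3 : ν (C (-1) : Polynomial K) = 0 := by linarith
  have h4 : -p = (C (-1) : Polynomial K) * p := by
    simp [map_neg]
  rw [h4, hν.map_mul _ _ hm1 hp, h3, zero_add]

theorem nu_pow (hν : IsVal ν) {q : Polynomial K} (hq : q ≠ 0) (i : ℕ) :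
    ν (q ^ i) = (i : Γ) * ν q := by
  induction i with
  | zero => simpa using nu_one hν
  | succ n ih =>
      rw [pow_succ, hν.map_mul _ _ (pow_ne_zero _ hq) hq, ih]
      push_cast; ring

theorem nu_mul_pow (hν : IsVal ν) {p q : Polynomial K} (hp : p ≠ 0) (hq : q ≠ 0) (i : ℕ) :
    ν (p * q ^ i) = ν p + (i : Γ) * ν q := by
  rw [hν.map_mul _ _ hp (pow_ne_zero _ hq), nu_pow hν hq]

theorem nu_add_cases (hν : IsVal ν) {p q : Polynomial K} {c : Γ}
    (hpq : p + q ≠ 0) (hp : p = 0 ∨ c ≤ ν p) (hq : q = 0 ∨ c ≤ ν q) :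
    c ≤ ν (p + q) := by
  rcases eq_or_ne p 0 with rfl | hp0
  · rw [zero_add] at hpq ⊢
    exact hq.resolve_left hpq
  rcases eq_or_ne q 0 with rfl | hq0
  · rw [add_zero] at hpq ⊢
    exact hp.resolve_left hp0
  exact le_trans (le_min (hp.resolve_left hp0) (hq.resolve_left hq0))
    (hν.map_add _ _ hp0 hq0 hpq)

theorem nu_add_eq_left (hν : IsVal ν) {p q : Polynomial K} {c : Γ}
    (hp : p ≠ 0) (hpv : ν p = c) (hq : q ≠ 0 → c < ν q) :
    p + q ≠ 0 ∧ ν (p + q) = c := by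
  rcases eq_or_ne q 0 with rfl | hq0
  · simp [hp, hpv]
  have hcq := hq hq0
  have hne : p + q ≠ 0 := by
    intro h
    have hpq : p = -q := by linear_combination h
    rw [hpq, nu_neg hν] at hpv
    exact absurd hpv (ne_of_gt hcq)
  refine ⟨hne, le_antisymm ?_ ?_⟩
  · have h1 := hν.map_add (p + q) (-q) hne (neg_ne_zero.2 hq0)
      (by rw [add_neg_cancel_right]; exact hp)
    rw [add_neg_cancel_right, nu_neg hν, hpv] at h1
    rcases le_total (ν (p + q)) (ν q) with h | h
    · rwa [min_eq_left h] at h1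
    · rw [min_eq_right h] at h1; linarith
  · have h2 := hν.map_add p q hp hq0 hne
    rw [hpv] at h2
    exact le_trans (le_min le_rfl hcq.le) h2

theorem nu_sum_ge (hν : IsVal ν) {ι : Type*} (c : Γ) (s : Finset ι) (F : ι → Polynomial K) :
    (∀ i ∈ s, F i ≠ 0 → c ≤ ν (F i)) →
      (∑ i ∈ s, F i) = 0 ∨ c ≤ ν (∑ i ∈ s, F i) := by
  induction s using Finset.cons_induction with
  | empty => intro _; left; simp
  | cons a s ha ih =>
    intro h
    rw [Finset.sum_cons]
    rcases eq_or_ne (F a + ∑ i ∈ s, F i) 0 with h0 | h0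
    · exact Or.inl h0
    refine Or.inr (nu_add_cases hν h0 ?_ ?_)
    · rcases eq_or_ne (F a) 0 with hFa | hFa
      · exact Or.inl hFa
      · exact Or.inr (h a (Finset.mem_cons_self _ _) hFa)
    · exact ih fun i hi => h i (Finset.mem_cons_of_mem hi)

theorem nu_sum_gt (hν : IsVal ν) {ι : Type*} (c : Γ) (s : Finset ι) (F : ι → Polynomial K) :
    (∀ i ∈ s, F i ≠ 0 → c < ν (F i)) →
      (∑ i ∈ s, F i) = 0 ∨ c < ν (∑ i ∈ s, F i) := by
  induction s using Finset.cons_induction with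
  | empty => intro _; left; simp
  | cons a s ha ih =>
    intro h
    rw [Finset.sum_cons]
    rcases eq_or_ne (F a + ∑ i ∈ s, F i) 0 with h0 | h0
    · exact Or.inl h0
    rcases eq_or_ne (F a) 0 with hFa | hFa
    · rw [hFa, zero_add] at h0 ⊢
      exact Or.inr ((ih fun i hi => h i (Finset.mem_cons_of_mem hi)).resolve_left h0)
    rcases eq_or_ne (∑ i ∈ s, F i) 0 with hS | hS
    · rw [hS, add_zero] at h0 ⊢
      exact Or.inr (h a (Finset.mem_cons_self _ _) hFa)
    refine Or.inr (lt_of_lt_of_le ?_ (hν.map_add _ _ hFa hS h0))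
    exact lt_min (h a (Finset.mem_cons_self _ _) hFa)
      ((ih fun i hi => h i (Finset.mem_cons_of_mem hi)).resolve_left hS)

theorem nu_sum_unique (hν : IsVal ν) {ι : Type*} {c : Γ} (s : Finset ι) (F : ι → Polynomial K)
    (i₀ : ι) (hi₀ : i₀ ∈ s) (h0 : F i₀ ≠ 0) (hv : ν (F i₀) = c)
    (hrest : ∀ i ∈ s, i ≠ i₀ → F i ≠ 0 → c < ν (F i)) :
    (∑ i ∈ s, F i) ≠ 0 ∧ ν (∑ i ∈ s, F i) = c := by
  classical
  rw [← Finset.add_sum_erase s F hi₀]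
  refine nu_add_eq_left hν h0 hv ?_
  intro hS
  exact (nu_sum_gt hν c (s.erase i₀) F fun i hi hFi =>
    hrest i (Finset.mem_of_mem_erase hi) (Finset.ne_of_mem_erase hi) hFi).resolve_left hS

end TruncAux

namespace TruncAux

variable {K : Type*} [Field K] {Γ : Type*} [Field Γ] [LinearOrder Γ] [IsStrictOrderedRing Γ]
variable {ν : Polynomial K → Γ} {Q : Polynomial K}

theorem hasse_ne_zero_le {f : Polynomial K} {b : ℕ} (h : Polynomial.hasseDeriv b f ≠ 0) :
    b ≤ f.natDegree := by
  by_contra hb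
  push_neg at hb
  apply h
  ext n
  rw [Polynomial.hasseDeriv_coeff, Polynomial.coeff_eq_zero_of_natDegree_lt (by omega),
    mul_zero, Polynomial.coeff_zero]

theorem hasse_natDegree_ne_zero {f : Polynomial K} (hf : f ≠ 0) :
    Polynomial.hasseDeriv f.natDegree f ≠ 0 := by
  intro h
  have h0 := congrArg (fun p => Polynomial.coeff p 0) h
  simp only [Polynomial.hasseDeriv_coeff, zero_add, Nat.choose_self, Nat.cast_one, one_mul,
    Polynomial.coeff_zero] at h0
  exact hf (Polynomial.leadingCoeff_eq_zero.mp h0)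

theorem le_eps {f : Polynomial K} {b : ℕ} (hb : 1 ≤ b) (h : Polynomial.hasseDeriv b f ≠ 0) :
    (ν f - ν (Polynomial.hasseDeriv b f)) / (b : Γ) ≤ eps ν f := by
  have hmem : b ∈ (Finset.Icc 1 f.natDegree).filter
      (fun b => Polynomial.hasseDeriv b f ≠ 0) := by
    simp only [Finset.mem_filter, Finset.mem_Icc]
    exact ⟨⟨hb, hasse_ne_zero_le h⟩, h⟩
  rw [eps, dif_pos ⟨b, hmem⟩]
  exact Finset.le_sup' (fun b => (ν f - ν (Polynomial.hasseDeriv b f)) / (b : Γ)) hmem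

theorem nu_hasse_ge {f : Polynomial K} {b : ℕ} (hb : 1 ≤ b)
    (h : Polynomial.hasseDeriv b f ≠ 0) :
    ν f - (b : Γ) * eps ν f ≤ ν (Polynomial.hasseDeriv b f) := by
  have hbpos : (0 : Γ) < (b : Γ) := by exact_mod_cast hb
  have h1 := le_eps (ν := ν) hb h
  rw [div_le_iff₀ hbpos] at h1
  have := mul_comm (eps ν f) (b : Γ)
  linarith

theorem exists_Iset (hQ : IsKeyPol ν Q) :
    ∃ b : ℕ, 1 ≤ b ∧ Polynomial.hasseDeriv b Q ≠ 0 ∧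
      ν (Polynomial.hasseDeriv b Q) = ν Q - (b : Γ) * eps ν Q := by
  have hQ0 : Q ≠ 0 := hQ.1.ne_zero
  have hmem : Q.natDegree ∈ (Finset.Icc 1 Q.natDegree).filter
      (fun b => Polynomial.hasseDeriv b Q ≠ 0) := by
    simp only [Finset.mem_filter, Finset.mem_Icc]
    exact ⟨⟨hQ.2.1, le_rfl⟩, hasse_natDegree_ne_zero hQ0⟩
  have hne : ((Finset.Icc 1 Q.natDegree).filter
      (fun b => Polynomial.hasseDeriv b Q ≠ 0)).Nonempty := ⟨_, hmem⟩
  obtain ⟨b, hbmem, hbeq⟩ := Finset.exists_mem_eq_sup' hne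
    (fun b => (ν Q - ν (Polynomial.hasseDeriv b Q)) / (b : Γ))
  simp only [Finset.mem_filter, Finset.mem_Icc] at hbmem
  refine ⟨b, hbmem.1.1, hbmem.2, ?_⟩
  have hbpos : (0 : Γ) < (b : Γ) := by exact_mod_cast hbmem.1.1
  have heq : eps ν Q = (ν Q - ν (Polynomial.hasseDeriv b Q)) / (b : Γ) := by
    rw [eps, dif_pos hne]; exact hbeq
  rw [eq_div_iff hbpos.ne'] at heq
  have := mul_comm (eps ν Q) (b : Γ)
  linarith

theorem eps_lt (hQ : IsKeyPol ν Q) {f : Polynomial K} (h1 : 1 ≤ f.natDegree)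
    (h2 : f.natDegree < Q.natDegree) : eps ν f < eps ν Q := by
  by_contra h
  push_neg at h
  exact absurd (hQ.2.2 f h1 h) (by omega)

theorem nu_hasse_ge' (hQ : IsKeyPol ν Q) {f : Polynomial K} (hfd : f.natDegree < Q.natDegree)
    (i : ℕ) (h : Polynomial.hasseDeriv i f ≠ 0) :
    ν f - (i : Γ) * eps ν Q ≤ ν (Polynomial.hasseDeriv i f) ∧
      (1 ≤ i → ν f - (i : Γ) * eps ν Q < ν (Polynomial.hasseDeriv i f)) := by
  rcases Nat.eq_zero_or_pos i with rfl | hi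
  · simp [Polynomial.hasseDeriv_zero']
  · have h1f : 1 ≤ f.natDegree := le_trans hi (hasse_ne_zero_le h)
    have he := eps_lt hQ h1f hfd
    have hg := nu_hasse_ge (ν := ν) hi h
    have hipos : (0 : Γ) < (i : Γ) := by exact_mod_cast hi
    have hmul : (i : Γ) * eps ν f < (i : Γ) * eps ν Q := by
      exact mul_lt_mul_of_pos_left he hipos
    exact ⟨by linarith, fun _ => by linarith⟩

theorem hQbound (hQ : IsKeyPol ν Q) (i : ℕ) (h : Polynomial.hasseDeriv i Q ≠ 0) :
    ν Q - (i : Γ) * eps ν Q ≤ ν (Polynomial.hasseDeriv i Q) := by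
  rcases Nat.eq_zero_or_pos i with rfl | hi
  · simp [Polynomial.hasseDeriv_zero']
  · exact nu_hasse_ge hi h

theorem leibniz (hν : IsVal ν) (hQ : IsKeyPol ν Q) {f g : Polynomial K}
    (hf : f ≠ 0) (hg : g ≠ 0) (hfd : f.natDegree < Q.natDegree)
    (hgd : g.natDegree < Q.natDegree)
    {b : ℕ} (hb : 1 ≤ b) (h : Polynomial.hasseDeriv b (f * g) ≠ 0) :
    ν f + ν g - (b : Γ) * eps ν Q < ν (Polynomial.hasseDeriv b (f * g)) := by
  rw [Polynomial.hasseDeriv_mul] at h ⊢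
  have key : ∀ p ∈ Finset.HasAntidiagonal.antidiagonal b,
      (Polynomial.hasseDeriv p.1 f * Polynomial.hasseDeriv p.2 g) ≠ 0 →
      ν f + ν g - (b : Γ) * eps ν Q <
        ν (Polynomial.hasseDeriv p.1 f * Polynomial.hasseDeriv p.2 g) := by
    intro p hp hne
    obtain ⟨h1, h2⟩ := mul_ne_zero_iff.mp hne
    have hab : p.1 + p.2 = b := Finset.HasAntidiagonal.mem_antidiagonal.mp hp
    have hA := nu_hasse_ge' hQ hfd p.1 h1
    have hB := nu_hasse_ge' hQ hgd p.2 h2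
    have hsplit : (b : Γ) * eps ν Q = (p.1 : Γ) * eps ν Q + (p.2 : Γ) * eps ν Q := by
      rw [← add_mul]
      congr 1
      exact_mod_cast hab.symm
    rw [hν.map_mul _ _ h1 h2]
    rcases Nat.eq_zero_or_pos p.1 with hz | hpos
    · have hp2 : 1 ≤ p.2 := by omega
      have hB2 := hB.2 hp2
      have hA1 := hA.1
      linarith
    · have hA2 := hA.2 hpos
      have hB1 := hB.1
      linarith
  rcases nu_sum_gt hν _ _ _ key with h0 | h0
  · exact absurd h0 h
  · exact h0

theorem core (hν : IsVal ν) (hQ : IsKeyPol ν Q) {f g : Polynomial K}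
    (hf : f ≠ 0) (hg : g ≠ 0) (hfd : f.natDegree < Q.natDegree)
    (hgd : g.natDegree < Q.natDegree) :
    (f * g) %ₘ Q ≠ 0 ∧ ν ((f * g) %ₘ Q) = ν f + ν g ∧
      ((f * g) /ₘ Q ≠ 0 → ν f + ν g < ν ((f * g) /ₘ Q) + ν Q) := by
  have hQ0 : Q ≠ 0 := hQ.1.ne_zero
  have hne : f * g ≠ 0 := mul_ne_zero hf hg
  have hsplit : (f * g) %ₘ Q + Q * ((f * g) /ₘ Q) = f * g :=
    Polynomial.modByMonic_add_div (f * g) Q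
  set c := (f * g) /ₘ Q with hc
  set r := (f * g) %ₘ Q with hr
  by_cases hc0 : c = 0
  · rw [hc0, mul_zero, add_zero] at hsplit
    exact ⟨hsplit ▸ hne, by rw [hsplit]; exact hν.map_mul f g hf hg,
      fun hcc => absurd hc0 hcc⟩
  have hdh : (f * g).natDegree = f.natDegree + g.natDegree :=
    Polynomial.natDegree_mul hf hg
  have hdegc : c.natDegree < Q.natDegree := by
    have hnd := Polynomial.natDegree_divByMonic (f * g) hQ.1
    rw [← hc] at hnd
    have hQd := hQ.2.1
    omega
  have hdegr : r ≠ 0 → r.natDegree < Q.natDegree := fun hr0 =>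
    Polynomial.natDegree_lt_natDegree hr0 (Polynomial.degree_modByMonic_lt _ hQ.1)
  have KEY : r ≠ 0 ∧ ν r < ν c + ν Q := by
    by_contra hK
    have hch : ν c + ν Q ≤ ν (f * g) ∧ (r ≠ 0 → ν c + ν Q ≤ ν r) := by
      by_cases hr0 : r = 0
      · rw [hr0, zero_add] at hsplit
        constructor
        · rw [← hsplit, hν.map_mul Q c hQ0 hc0]; linarith
        · intro hr1; exact absurd hr0 hr1
      · have hle : ν c + ν Q ≤ ν r := by
          by_contra hlt
          push_neg at hlt
          exact hK ⟨hr0, hlt⟩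
        refine ⟨?_, fun _ => hle⟩
        have hmadd := hν.map_add r (Q * c) hr0 (mul_ne_zero hQ0 hc0) (hsplit ▸ hne)
        rw [hsplit, hν.map_mul Q c hQ0 hc0] at hmadd
        calc ν c + ν Q ≤ min (ν r) (ν Q + ν c) := le_min hle (by linarith)
          _ ≤ ν (f * g) := hmadd
    obtain ⟨b, hb1, hbQ, hbval⟩ := exists_Iset hQ
    set m : Γ := ν c + ν Q - (b : Γ) * eps ν Q with hm
    have hdecomp : Polynomial.hasseDeriv b (f * g) =
        (∑ p ∈ Finset.HasAntidiagonal.antidiagonal b,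
          Polynomial.hasseDeriv p.1 Q * Polynomial.hasseDeriv p.2 c) +
          Polynomial.hasseDeriv b r := by
      conv_lhs => rw [← hsplit]
      rw [map_add, Polynomial.hasseDeriv_mul, add_comm]
    have hS : (∑ p ∈ Finset.HasAntidiagonal.antidiagonal b,
        Polynomial.hasseDeriv p.1 Q * Polynomial.hasseDeriv p.2 c) ≠ 0 ∧
        ν (∑ p ∈ Finset.HasAntidiagonal.antidiagonal b,
          Polynomial.hasseDeriv p.1 Q * Polynomial.hasseDeriv p.2 c) = m := by
      refine nu_sum_unique hν _ _ ((b, 0) : ℕ × ℕ) ?_ ?_ ?_ ?_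
      · exact Finset.HasAntidiagonal.mem_antidiagonal.mpr (by omega)
      · simp only [Polynomial.hasseDeriv_zero']
        exact mul_ne_zero hbQ hc0
      · simp only [Polynomial.hasseDeriv_zero']
        rw [hν.map_mul _ _ hbQ hc0, hbval, hm]; ring
      · intro p hp hpne hp0
        obtain ⟨h1, h2⟩ := mul_ne_zero_iff.mp hp0
        have hab : p.1 + p.2 = b := Finset.HasAntidiagonal.mem_antidiagonal.mp hp
        have hp2 : 1 ≤ p.2 := by
          rcases Nat.eq_zero_or_pos p.2 with hz | hpos
          · exfalso; apply hpne
            have : p.1 = b := by omega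
            exact Prod.ext this hz
          · exact hpos
        have hQb := hQbound hQ p.1 h1
        have hcb := (nu_hasse_ge' hQ hdegc p.2 h2).2 hp2
        have hsplit2 : (b : Γ) * eps ν Q = (p.1 : Γ) * eps ν Q + (p.2 : Γ) * eps ν Q := by
          rw [← add_mul]; congr 1; exact_mod_cast hab.symm
        rw [hν.map_mul _ _ h1 h2, hm]
        linarith
    have hT : Polynomial.hasseDeriv b r ≠ 0 → m < ν (Polynomial.hasseDeriv b r) := by
      intro hTne
      have hr0 : r ≠ 0 := by
        intro h0; rw [h0, map_zero] at hTne; exact hTne rfl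
      have := (nu_hasse_ge' hQ (hdegr hr0) b hTne).2 hb1
      have hle := hch.2 hr0
      rw [hm]; linarith
    have hfinal := nu_add_eq_left hν hS.1 hS.2 hT
    rw [← hdecomp] at hfinal
    have hleib := leibniz hν hQ hf hg hfd hgd hb1 hfinal.1
    rw [hfinal.2, hm] at hleib
    have hνfg : ν (f * g) = ν f + ν g := hν.map_mul f g hf hg
    have hch1 := hch.1
    rw [hνfg] at hch1
    linarith
  obtain ⟨hr0, hrlt⟩ := KEY
  have hfin := nu_add_eq_left hν hr0 rfl (fun hqc => by
    rw [hν.map_mul Q c hQ0 hc0]; linarith)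
  rw [hsplit] at hfin
  have hνfg : ν (f * g) = ν f + ν g := hν.map_mul f g hf hg
  have hνr : ν r = ν f + ν g := by rw [← hfin.2, hνfg]
  exact ⟨hr0, hνr, fun _ => by rw [← hνr]; exact hrlt⟩

end TruncAux
namespace TruncAux

variable {K : Type*} [Field K] {Γ : Type*} [Field Γ] [LinearOrder Γ] [IsStrictOrderedRing Γ]
variable {ν : Polynomial K → Γ} {Q : Polynomial K}

theorem divByMonic_pow_succ (hQm : Q.Monic) (f : Polynomial K) (i : ℕ) :
    f /ₘ Q ^ (i + 1) = (f /ₘ Q) /ₘ Q ^ i := by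
  have hQ0 : Q ≠ 0 := hQm.ne_zero
  refine (Polynomial.div_modByMonic_unique _ (f %ₘ Q + Q * ((f /ₘ Q) %ₘ Q ^ i))
    (hQm.pow (i + 1)) ⟨?_, ?_⟩).1
  · have e1 := Polynomial.modByMonic_add_div f Q
    have e2 := Polynomial.modByMonic_add_div (f /ₘ Q) (Q ^ i)
    calc f %ₘ Q + Q * ((f /ₘ Q) %ₘ Q ^ i) + Q ^ (i + 1) * ((f /ₘ Q) /ₘ Q ^ i)
        = f %ₘ Q + Q * ((f /ₘ Q) %ₘ Q ^ i + Q ^ i * ((f /ₘ Q) /ₘ Q ^ i)) := by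
          rw [pow_succ']; ring
      _ = f %ₘ Q + Q * (f /ₘ Q) := by rw [e2]
      _ = f := e1
  · have hQpow : (Q : Polynomial K) ^ (i + 1) ≠ 0 := pow_ne_zero _ hQ0
    refine lt_of_le_of_lt (Polynomial.degree_add_le _ _) (max_lt ?_ ?_)
    · refine lt_of_lt_of_le (Polynomial.degree_modByMonic_lt f hQm) ?_
      rw [pow_succ', Polynomial.degree_mul]
      exact le_add_of_nonneg_right (Polynomial.zero_le_degree_iff.mpr (pow_ne_zero _ hQ0))
    · rcases eq_or_ne ((f /ₘ Q) %ₘ Q ^ i) 0 with h0 | h0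
      · rw [h0, mul_zero, Polynomial.degree_zero]
        exact bot_lt_iff_ne_bot.mpr (fun hb => hQpow (Polynomial.degree_eq_bot.mp hb))
      · rw [pow_succ', Polynomial.degree_mul, Polynomial.degree_mul]
        exact WithBot.add_lt_add_left (fun hb => hQ0 (Polynomial.degree_eq_bot.mp hb))
          (Polynomial.degree_modByMonic_lt _ (hQm.pow i))

theorem qCoeff_zero' (f : Polynomial K) : qCoeff Q f 0 = f %ₘ Q := by
  rw [qCoeff, pow_zero, Polynomial.divByMonic_one]

theorem qCoeff_succ (hQm : Q.Monic) (f : Polynomial K) (i : ℕ) :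
    qCoeff Q f (i + 1) = qCoeff Q (f /ₘ Q) i := by
  rw [qCoeff, qCoeff, divByMonic_pow_succ hQm]

theorem qCoeff_ne_zero_le (hQm : Q.Monic) (hd1 : 1 ≤ Q.natDegree) {f : Polynomial K} {i : ℕ}
    (h : qCoeff Q f i ≠ 0) :
    f ≠ 0 ∧ i ≤ f.natDegree ∧ i * Q.natDegree ≤ f.natDegree := by
  have hdiv : f /ₘ Q ^ i ≠ 0 := by
    intro h0
    apply h
    rw [qCoeff, h0, Polynomial.zero_modByMonic]
  have hnl : ¬ (f.degree < (Q ^ i).degree) := by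
    intro hlt
    exact hdiv ((Polynomial.divByMonic_eq_zero_iff (hQm.pow i)).mpr hlt)
  have hf0 : f ≠ 0 := by
    rintro rfl
    apply hnl
    rw [Polynomial.degree_zero]
    exact bot_lt_iff_ne_bot.mpr
      (fun hb => (pow_ne_zero i hQm.ne_zero) (Polynomial.degree_eq_bot.mp hb))
  have hnd : (Q ^ i).natDegree ≤ f.natDegree :=
    Polynomial.natDegree_le_natDegree (le_of_not_gt hnl)
  rw [Polynomial.natDegree_pow] at hnd
  refine ⟨hf0, ?_, hnd⟩
  calc i = i * 1 := (mul_one i).symm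
    _ ≤ i * Q.natDegree := Nat.mul_le_mul_left i hd1
    _ ≤ f.natDegree := hnd

theorem divByMonic_pow_eq_zero (hQm : Q.Monic) (hd1 : 1 ≤ Q.natDegree) {f : Polynomial K}
    {N : ℕ} (h : f.natDegree < N) : f /ₘ Q ^ N = 0 := by
  rcases eq_or_ne f 0 with rfl | hf
  · exact Polynomial.zero_divByMonic _
  rw [Polynomial.divByMonic_eq_zero_iff (hQm.pow N)]
  rw [Polynomial.degree_eq_natDegree hf,
    Polynomial.degree_eq_natDegree (pow_ne_zero N hQm.ne_zero)]
  have hle : N ≤ (Q ^ N).natDegree := by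
    rw [Polynomial.natDegree_pow]
    calc N = N * 1 := (mul_one N).symm
      _ ≤ N * Q.natDegree := Nat.mul_le_mul_left N hd1
  exact_mod_cast lt_of_lt_of_le h hle

theorem sum_qCoeff (hQm : Q.Monic) : ∀ (N : ℕ) (f : Polynomial K), f /ₘ Q ^ N = 0 →
    ∑ i ∈ Finset.range N, qCoeff Q f i * Q ^ i = f := by
  intro N
  induction N with
  | zero =>
    intro f hf
    rw [pow_zero, Polynomial.divByMonic_one] at hf
    simp [hf]
  | succ n ih =>
    intro f hf
    rw [Finset.sum_range_succ']
    have h2 : (f /ₘ Q) /ₘ Q ^ n = 0 := by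
      rw [← divByMonic_pow_succ hQm]
      exact hf
    have ihe := ih (f /ₘ Q) h2
    simp only [qCoeff_succ hQm, pow_zero, mul_one, qCoeff_zero']
    have hmul : ∑ i ∈ Finset.range n, qCoeff Q (f /ₘ Q) i * Q ^ (i + 1)
        = (∑ i ∈ Finset.range n, qCoeff Q (f /ₘ Q) i * Q ^ i) * Q := by
      rw [Finset.sum_mul]
      refine Finset.sum_congr rfl fun i _ => ?_
      rw [pow_succ]; ring
    rw [hmul, ihe]
    have := Polynomial.modByMonic_add_div f Q
    linear_combination this

theorem qCoeff_of_sum (hQm : Q.Monic) :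
    ∀ (N : ℕ) (A : ℕ → Polynomial K), (∀ k, (A k).degree < Q.degree) →
    ∀ k, qCoeff Q (∑ i ∈ Finset.range N, A i * Q ^ i) k = if k < N then A k else 0 := by
  intro N
  induction N with
  | zero =>
    intro A hA k
    simp [qCoeff, Polynomial.zero_divByMonic, Polynomial.zero_modByMonic]
  | succ n ih =>
    intro A hA k
    have hfg : ∑ i ∈ Finset.range (n + 1), A i * Q ^ i
        = A 0 + Q * (∑ i ∈ Finset.range n, A (i + 1) * Q ^ i) := by
      rw [Finset.sum_range_succ']
      simp only [pow_zero, mul_one]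
      rw [add_comm, Finset.mul_sum]
      congr 1
      refine Finset.sum_congr rfl fun i _ => ?_
      rw [pow_succ]; ring
    have hdiv := Polynomial.div_modByMonic_unique
      (∑ i ∈ Finset.range n, A (i + 1) * Q ^ i) (A 0) hQm ⟨hfg.symm, hA 0⟩
    cases k with
    | zero =>
      rw [qCoeff_zero', hdiv.2]
      simp
    | succ m =>
      rw [qCoeff_succ hQm, hdiv.1, ih (fun i => A (i + 1)) (fun i => hA (i + 1)) m]
      simp only [Nat.add_lt_add_iff_right]

theorem qCoeff_degree_lt (hQm : Q.Monic) {f : Polynomial K} {i : ℕ}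
    (h : qCoeff Q f i ≠ 0) : (qCoeff Q f i).natDegree < Q.natDegree :=
  Polynomial.natDegree_lt_natDegree h (Polynomial.degree_modByMonic_lt _ hQm)

theorem trunc_le (hQm : Q.Monic) (hd1 : 1 ≤ Q.natDegree) {f : Polynomial K} {i : ℕ}
    (h : qCoeff Q f i ≠ 0) :
    truncVal ν Q f ≤ ν (qCoeff Q f i * Q ^ i) := by
  obtain ⟨hf0, hile, -⟩ := qCoeff_ne_zero_le hQm hd1 h
  have hmem : i ∈ (Finset.range (f.natDegree + 1)).filter (fun i => qCoeff Q f i ≠ 0) := by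
    simp only [Finset.mem_filter, Finset.mem_range]
    exact ⟨by omega, h⟩
  rw [truncVal, dif_pos ⟨i, hmem⟩]
  exact Finset.inf'_le (fun i => ν (qCoeff Q f i * Q ^ i)) hmem

theorem exists_min_attain (hQm : Q.Monic) (hd1 : 1 ≤ Q.natDegree) {f : Polynomial K}
    (hf : f ≠ 0) :
    ∃ i, qCoeff Q f i ≠ 0 ∧ ν (qCoeff Q f i * Q ^ i) = truncVal ν Q f ∧
      ∀ a, qCoeff Q f a ≠ 0 → a < i → truncVal ν Q f < ν (qCoeff Q f a * Q ^ a) := by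
  classical
  have hsne : ((Finset.range (f.natDegree + 1)).filter (fun i => qCoeff Q f i ≠ 0)).Nonempty := by
    by_contra hemp
    apply hf
    have hzero : ∀ i ∈ Finset.range (f.natDegree + 1), qCoeff Q f i * Q ^ i = 0 := by
      intro i hi
      rcases eq_or_ne (qCoeff Q f i) 0 with h0 | h0
      · rw [h0, zero_mul]
      · exact absurd ⟨i, Finset.mem_filter.mpr ⟨hi, h0⟩⟩ hemp
    have hexp := sum_qCoeff hQm (f.natDegree + 1) f
      (divByMonic_pow_eq_zero hQm hd1 (Nat.lt_succ_self _))
    rw [Finset.sum_eq_zero hzero] at hexp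
    exact hexp.symm
  have hex : ∃ i, qCoeff Q f i ≠ 0 ∧ ν (qCoeff Q f i * Q ^ i) = truncVal ν Q f := by
    obtain ⟨i, hi, hieq⟩ := Finset.exists_mem_eq_inf' hsne (fun i => ν (qCoeff Q f i * Q ^ i))
    have htv : truncVal ν Q f = ν (qCoeff Q f i * Q ^ i) := by
      rw [truncVal, dif_pos hsne]; exact hieq
    exact ⟨i, (Finset.mem_filter.mp hi).2, htv.symm⟩
  refine ⟨Nat.find hex, (Nat.find_spec hex).1, (Nat.find_spec hex).2, ?_⟩
  intro a ha halt
  refine lt_of_le_of_ne (trunc_le hQm hd1 ha) fun heq => ?_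
  exact Nat.find_min hex halt ⟨ha, heq.symm⟩

theorem divByMonic_add (hQm : Q.Monic) (p₁ p₂ : Polynomial K) :
    (p₁ + p₂) /ₘ Q = p₁ /ₘ Q + p₂ /ₘ Q := by
  refine (Polynomial.div_modByMonic_unique _ (p₁ %ₘ Q + p₂ %ₘ Q) hQm ⟨?_, ?_⟩).1
  · have e1 := Polynomial.modByMonic_add_div p₁ Q
    have e2 := Polynomial.modByMonic_add_div p₂ Q
    linear_combination e1 + e2
  · exact lt_of_le_of_lt (Polynomial.degree_add_le _ _)
      (max_lt (Polynomial.degree_modByMonic_lt _ hQm) (Polynomial.degree_modByMonic_lt _ hQm))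

theorem modByMonic_sum {ι : Type*} (s : Finset ι) (F : ι → Polynomial K) :
    (∑ i ∈ s, F i) %ₘ Q = ∑ i ∈ s, F i %ₘ Q := by
  induction s using Finset.cons_induction with
  | empty => simp [Polynomial.zero_modByMonic]
  | cons a s ha ih => rw [Finset.sum_cons, Finset.sum_cons, Polynomial.add_modByMonic, ih]

theorem divByMonic_sum (hQm : Q.Monic) {ι : Type*} (s : Finset ι) (F : ι → Polynomial K) :
    (∑ i ∈ s, F i) /ₘ Q = ∑ i ∈ s, F i /ₘ Q := by
  induction s using Finset.cons_induction with
  | empty => simp [Polynomial.zero_divByMonic]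
  | cons a s ha ih => rw [Finset.sum_cons, Finset.sum_cons, divByMonic_add hQm, ih]

theorem sum_range_antidiagonal {M : ℕ} (H : ℕ → ℕ → Polynomial K)
    (hH : ∀ a b, M ≤ a + b → H a b = 0) :
    ∑ j ∈ Finset.range M, ∑ p ∈ Finset.HasAntidiagonal.antidiagonal j, H p.1 p.2
      = ∑ a ∈ Finset.range M, ∑ b ∈ Finset.range M, H a b := by
  classical
  rw [← Finset.sum_product']
  rw [Finset.sum_sigma']
  rw [← Finset.sum_filter_of_ne
    (p := fun p : ℕ × ℕ => p.1 + p.2 < M)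
    (fun p _ hne => by by_contra hnlt; exact hne (hH p.1 p.2 (by omega)))]
  refine Finset.sum_nbij' (fun x => x.2) (fun p => ⟨p.1 + p.2, p⟩) ?_ ?_ ?_ ?_ ?_
  · rintro ⟨j, a, b⟩ hx
    simp only [Finset.mem_sigma, Finset.mem_range, Finset.HasAntidiagonal.mem_antidiagonal] at hx
    simp only [Finset.mem_filter, Finset.mem_product, Finset.mem_range]
    omega
  · rintro ⟨a, b⟩ hp
    simp only [Finset.mem_filter, Finset.mem_product, Finset.mem_range] at hp
    refine Finset.mem_sigma.mpr ⟨?_, ?_⟩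
    · simp only [Finset.mem_range]; omega
    · simp only [Finset.HasAntidiagonal.mem_antidiagonal]
  · rintro ⟨j, a, b⟩ hx
    simp only [Finset.mem_sigma, Finset.mem_range, Finset.HasAntidiagonal.mem_antidiagonal] at hx
    dsimp only
    rw [hx.2]
  · rintro ⟨a, b⟩ hp
    rfl
  · rintro ⟨j, a, b⟩ hx
    rfl

end TruncAux
namespace TruncAux

variable {K : Type*} [Field K] {Γ : Type*} [Field Γ] [LinearOrder Γ] [IsStrictOrderedRing Γ]
variable {ν : Polynomial K → Γ} {Q : Polynomial K}

theorem trunc_add (hν : IsVal ν) (hQ : IsKeyPol ν Q) {f g : Polynomial K}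
    (hf : f ≠ 0) (hg : g ≠ 0) (hfg : f + g ≠ 0) :
    min (truncVal ν Q f) (truncVal ν Q g) ≤ truncVal ν Q (f + g) := by
  have hQm := hQ.1
  have hd1 := hQ.2.1
  obtain ⟨i, hi0, hieq, -⟩ := exists_min_attain (ν := ν) hQm hd1 hfg
  rw [← hieq]
  have hadd : qCoeff Q (f + g) i = qCoeff Q f i + qCoeff Q g i := by
    rw [qCoeff, qCoeff, qCoeff, divByMonic_add (hQm.pow i), Polynomial.add_modByMonic]
  rw [hadd, add_mul]
  refine nu_add_cases hν ?_ ?_ ?_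
  · rw [← add_mul, ← hadd]
    exact mul_ne_zero hi0 (pow_ne_zero _ hQm.ne_zero)
  · rcases eq_or_ne (qCoeff Q f i) 0 with h0 | h0
    · left; rw [h0, zero_mul]
    · right; exact le_trans (min_le_left _ _) (trunc_le hQm hd1 h0)
  · rcases eq_or_ne (qCoeff Q g i) 0 with h0 | h0
    · left; rw [h0, zero_mul]
    · right; exact le_trans (min_le_right _ _) (trunc_le hQm hd1 h0)

theorem trunc_mul (hν : IsVal ν) (hQ : IsKeyPol ν Q) {f g : Polynomial K}
    (hf : f ≠ 0) (hg : g ≠ 0) :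
    truncVal ν Q (f * g) = truncVal ν Q f + truncVal ν Q g := by
  classical
  have hQm := hQ.1
  have hd1 := hQ.2.1
  have hQ0 : Q ≠ 0 := hQm.ne_zero
  set B := fun k => ∑ p ∈ Finset.HasAntidiagonal.antidiagonal k, (qCoeff Q f) p.1 * (qCoeff Q g) p.2 with hB
  set A := fun k => B k %ₘ Q + (if k = 0 then 0 else B (k - 1) /ₘ Q) with hA
  set M := f.natDegree + g.natDegree + 1 with hM
  have hFdeg : ∀ a, ((qCoeff Q f) a).natDegree ≤ Q.natDegree - 1 := by
    intro a
    rcases eq_or_ne ((qCoeff Q f) a) 0 with h0 | h0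
    · rw [h0]; simp
    · have := qCoeff_degree_lt hQm h0; omega
  have hGdeg : ∀ b, ((qCoeff Q g) b).natDegree ≤ Q.natDegree - 1 := by
    intro b
    rcases eq_or_ne ((qCoeff Q g) b) 0 with h0 | h0
    · rw [h0]; simp
    · have := qCoeff_degree_lt hQm h0; omega
  have hBdeg : ∀ j, (B j).natDegree ≤ 2 * Q.natDegree - 2 := by
    intro j
    refine Polynomial.natDegree_sum_le_of_forall_le _ _ fun p _ => ?_
    refine le_trans Polynomial.natDegree_mul_le ?_
    have h1 := hFdeg p.1
    have h2 := hGdeg p.2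
    omega
  have hA_deg : ∀ k, (A k).degree < Q.degree := by
    intro k
    simp only [hA]
    refine lt_of_le_of_lt (Polynomial.degree_add_le _ _)
      (max_lt (Polynomial.degree_modByMonic_lt _ hQm) ?_)
    rcases eq_or_ne k 0 with rfl | hk0
    · rw [if_pos rfl, Polynomial.degree_zero]
      exact bot_lt_iff_ne_bot.mpr (fun hb => hQ0 (Polynomial.degree_eq_bot.mp hb))
    rw [if_neg hk0]
    rcases eq_or_ne (B (k - 1) /ₘ Q) 0 with h0 | h0
    · rw [h0, Polynomial.degree_zero]
      exact bot_lt_iff_ne_bot.mpr (fun hb => hQ0 (Polynomial.degree_eq_bot.mp hb))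
    · apply Polynomial.degree_lt_degree
      have h1 := Polynomial.natDegree_divByMonic (B (k - 1)) hQm
      have h2 := hBdeg (k - 1)
      omega
  have hBzero : ∀ j, f.natDegree + g.natDegree < j → B j = 0 := by
    intro j hj
    refine Finset.sum_eq_zero fun p hp => ?_
    have hab := Finset.HasAntidiagonal.mem_antidiagonal.mp hp
    rcases eq_or_ne ((qCoeff Q f) p.1) 0 with h0 | h0
    · rw [h0, zero_mul]
    rcases eq_or_ne ((qCoeff Q g) p.2) 0 with h1 | h1
    · rw [h1, mul_zero]
    obtain ⟨-, ha, -⟩ := qCoeff_ne_zero_le hQm hd1 h0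
    obtain ⟨-, hb, -⟩ := qCoeff_ne_zero_le hQm hd1 h1
    omega
  have hexp : f * g = ∑ k ∈ Finset.range (M + 1), A k * Q ^ k := by
    have h1 : ∑ k ∈ Finset.range (M + 1), A k * Q ^ k
        = ∑ k ∈ Finset.range (M + 1), (B k %ₘ Q) * Q ^ k
          + ∑ k ∈ Finset.range (M + 1), (if k = 0 then 0 else B (k - 1) /ₘ Q) * Q ^ k := by
      rw [← Finset.sum_add_distrib]
      refine Finset.sum_congr rfl fun k _ => ?_
      simp only [hA]; ring
    have h2 : ∑ k ∈ Finset.range (M + 1), (if k = 0 then 0 else B (k - 1) /ₘ Q) * Q ^ k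
        = ∑ j ∈ Finset.range M, (B j /ₘ Q) * Q ^ (j + 1) := by
      rw [Finset.sum_range_succ']
      simp
    have h3 : ∑ k ∈ Finset.range (M + 1), (B k %ₘ Q) * Q ^ k
        = ∑ k ∈ Finset.range M, (B k %ₘ Q) * Q ^ k := by
      rw [Finset.sum_range_succ, hBzero M (by omega), Polynomial.zero_modByMonic,
        zero_mul, add_zero]
    rw [h1, h2, h3, ← Finset.sum_add_distrib]
    have h4 : ∀ k ∈ Finset.range M,
        (B k %ₘ Q) * Q ^ k + (B k /ₘ Q) * Q ^ (k + 1) = B k * Q ^ k := by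
      intro k _
      have hmd := Polynomial.modByMonic_add_div (B k) Q
      calc (B k %ₘ Q) * Q ^ k + (B k /ₘ Q) * Q ^ (k + 1)
          = (B k %ₘ Q + Q * (B k /ₘ Q)) * Q ^ k := by rw [pow_succ']; ring
        _ = B k * Q ^ k := by rw [hmd]
    rw [Finset.sum_congr rfl h4]
    have hfe : f = ∑ a ∈ Finset.range M, (qCoeff Q f) a * Q ^ a :=
      (sum_qCoeff hQm M f (divByMonic_pow_eq_zero hQm hd1 (by omega))).symm
    have hge : g = ∑ b ∈ Finset.range M, (qCoeff Q g) b * Q ^ b :=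
      (sum_qCoeff hQm M g (divByMonic_pow_eq_zero hQm hd1 (by omega))).symm
    conv_lhs => rw [hfe, hge]
    rw [Finset.sum_mul_sum]
    have hH : ∀ a b, M ≤ a + b → ((qCoeff Q f) a * Q ^ a) * ((qCoeff Q g) b * Q ^ b) = 0 := by
      intro a b hab
      rcases eq_or_ne ((qCoeff Q f) a) 0 with h0 | h0
      · rw [h0]; ring
      rcases eq_or_ne ((qCoeff Q g) b) 0 with h1 | h1
      · rw [h1]; ring
      obtain ⟨-, ha, -⟩ := qCoeff_ne_zero_le hQm hd1 h0
      obtain ⟨-, hb, -⟩ := qCoeff_ne_zero_le hQm hd1 h1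
      omega
    rw [← sum_range_antidiagonal _ hH]
    refine Finset.sum_congr rfl fun j _ => ?_
    simp only [hB]
    rw [Finset.sum_mul]
    refine Finset.sum_congr rfl fun p hp => ?_
    have hab := Finset.HasAntidiagonal.mem_antidiagonal.mp hp
    rw [← hab, pow_add]; ring
  have hqc : ∀ k, k < M + 1 → qCoeff Q (f * g) k = A k := by
    intro k hk
    rw [hexp, qCoeff_of_sum hQm (M + 1) A hA_deg k, if_pos hk]
  set tf := truncVal ν Q f with htf
  set tg := truncVal ν Q g with htg
  have hFv : ∀ a, (qCoeff Q f) a ≠ 0 → tf ≤ ν ((qCoeff Q f) a * Q ^ a) := fun a h => trunc_le hQm hd1 h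
  have hGv : ∀ b, (qCoeff Q g) b ≠ 0 → tg ≤ ν ((qCoeff Q g) b * Q ^ b) := fun b h => trunc_le hQm hd1 h
  have hr_val : ∀ a b, ((qCoeff Q f) a * (qCoeff Q g) b) %ₘ Q ≠ 0 →
      (qCoeff Q f) a ≠ 0 ∧ (qCoeff Q g) b ≠ 0 ∧
      ∀ k, a + b = k → ν (((qCoeff Q f) a * (qCoeff Q g) b) %ₘ Q * Q ^ k) = ν ((qCoeff Q f) a * Q ^ a) + ν ((qCoeff Q g) b * Q ^ b) := by
    intro a b h
    have hne : (qCoeff Q f) a * (qCoeff Q g) b ≠ 0 := by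
      intro h0; apply h; rw [h0, Polynomial.zero_modByMonic]
    obtain ⟨hFa, hGb⟩ := mul_ne_zero_iff.mp hne
    have hco := core hν hQ hFa hGb (qCoeff_degree_lt hQm hFa) (qCoeff_degree_lt hQm hGb)
    refine ⟨hFa, hGb, fun k hk => ?_⟩
    rw [nu_mul_pow hν h hQ0 k, hco.2.1, nu_mul_pow hν hFa hQ0 a, nu_mul_pow hν hGb hQ0 b]
    have hcast : ((k : Γ)) = (a : Γ) + (b : Γ) := by exact_mod_cast hk.symm
    rw [hcast]; ring
  have hc_val : ∀ a b, ((qCoeff Q f) a * (qCoeff Q g) b) /ₘ Q ≠ 0 →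
      ∀ k, a + b + 1 = k →
        ν ((qCoeff Q f) a * Q ^ a) + ν ((qCoeff Q g) b * Q ^ b) < ν (((qCoeff Q f) a * (qCoeff Q g) b) /ₘ Q * Q ^ k) := by
    intro a b h k hk
    have hne : (qCoeff Q f) a * (qCoeff Q g) b ≠ 0 := by
      intro h0; apply h; rw [h0, Polynomial.zero_divByMonic]
    obtain ⟨hFa, hGb⟩ := mul_ne_zero_iff.mp hne
    have hco := core hν hQ hFa hGb (qCoeff_degree_lt hQm hFa) (qCoeff_degree_lt hQm hGb)
    have hlt := hco.2.2 h
    rw [nu_mul_pow hν h hQ0 k, nu_mul_pow hν hFa hQ0 a, nu_mul_pow hν hGb hQ0 b]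
    have hcast : ((k : Γ)) = (a : Γ) + (b : Γ) + 1 := by exact_mod_cast hk.symm
    have hring : ((a : Γ) + (b : Γ) + 1) * ν Q = (a : Γ) * ν Q + (b : Γ) * ν Q + ν Q := by
      ring
    rw [hcast, hring]
    linarith
  have hAQ : ∀ k, A k * Q ^ k
      = (∑ p ∈ Finset.HasAntidiagonal.antidiagonal k, (((qCoeff Q f) p.1 * (qCoeff Q g) p.2) %ₘ Q) * Q ^ k)
        + (if k = 0 then 0 else
          ∑ p ∈ Finset.HasAntidiagonal.antidiagonal (k - 1), (((qCoeff Q f) p.1 * (qCoeff Q g) p.2) /ₘ Q) * Q ^ k) := by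
    intro k
    simp only [hA]
    rw [add_mul]
    congr 1
    · simp only [hB]
      rw [modByMonic_sum, Finset.sum_mul]
    · rcases eq_or_ne k 0 with rfl | hk
      · simp
      · rw [if_neg hk, if_neg hk]
        simp only [hB]
        rw [divByMonic_sum hQm, Finset.sum_mul]
  have hge2 : tf + tg ≤ truncVal ν Q (f * g) := by
    obtain ⟨k, hk0, hkeq, -⟩ := exists_min_attain (ν := ν) hQm hd1 (mul_ne_zero hf hg)
    rw [← hkeq]
    have hkM : k < M + 1 := by
      obtain ⟨-, hk, -⟩ := qCoeff_ne_zero_le hQm hd1 hk0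
      have hnd := Polynomial.natDegree_mul hf hg
      omega
    rw [hqc k hkM] at hk0 ⊢
    rw [hAQ k]
    refine nu_add_cases hν ?_ ?_ ?_
    · rw [← hAQ k]
      exact mul_ne_zero hk0 (pow_ne_zero _ hQ0)
    · refine nu_sum_ge hν _ _ _ fun p hp hne => ?_
      have hab := Finset.HasAntidiagonal.mem_antidiagonal.mp hp
      have hrr : (((qCoeff Q f) p.1 * (qCoeff Q g) p.2) %ₘ Q) ≠ 0 := by
        intro h0; apply hne; rw [h0, zero_mul]
      obtain ⟨hFa, hGb, hval⟩ := hr_val p.1 p.2 hrr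
      rw [hval k hab]
      have h1 := hFv p.1 hFa
      have h2 := hGv p.2 hGb
      linarith
    · rcases eq_or_ne k 0 with rfl | hk
      · left; rw [if_pos rfl]
      rw [if_neg hk]
      refine nu_sum_ge hν _ _ _ fun p hp hne => ?_
      have hab := Finset.HasAntidiagonal.mem_antidiagonal.mp hp
      have hcc : (((qCoeff Q f) p.1 * (qCoeff Q g) p.2) /ₘ Q) ≠ 0 := by
        intro h0; apply hne; rw [h0, zero_mul]
      have hlt := hc_val p.1 p.2 hcc k (by omega)
      have hne2 : (qCoeff Q f) p.1 * (qCoeff Q g) p.2 ≠ 0 := by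
        intro h0; apply hcc; rw [h0, Polynomial.zero_divByMonic]
      obtain ⟨hFa, hGb⟩ := mul_ne_zero_iff.mp hne2
      have h1 := hFv p.1 hFa
      have h2 := hGv p.2 hGb
      linarith
  have hle2 : truncVal ν Q (f * g) ≤ tf + tg := by
    obtain ⟨i₀, hi₀ne, hi₀eq, hi₀min⟩ := exists_min_attain (ν := ν) hQm hd1 hf
    obtain ⟨j₀, hj₀ne, hj₀eq, hj₀min⟩ := exists_min_attain (ν := ν) hQm hd1 hg
    have hi₀f : i₀ ≤ f.natDegree := (qCoeff_ne_zero_le hQm hd1 hi₀ne).2.1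
    have hj₀g : j₀ ≤ g.natDegree := (qCoeff_ne_zero_le hQm hd1 hj₀ne).2.1
    have hk₀M : i₀ + j₀ < M + 1 := by omega
    have hco₀ := core hν hQ hi₀ne hj₀ne (qCoeff_degree_lt hQm hi₀ne)
      (qCoeff_degree_lt hQm hj₀ne)
    have hX : (∑ p ∈ Finset.HasAntidiagonal.antidiagonal (i₀ + j₀), (((qCoeff Q f) p.1 * (qCoeff Q g) p.2) %ₘ Q) * Q ^ (i₀ + j₀)) ≠ 0 ∧
        ν (∑ p ∈ Finset.HasAntidiagonal.antidiagonal (i₀ + j₀), (((qCoeff Q f) p.1 * (qCoeff Q g) p.2) %ₘ Q) * Q ^ (i₀ + j₀))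
          = tf + tg := by
      refine nu_sum_unique hν _ _ ((i₀, j₀) : ℕ × ℕ) (Finset.HasAntidiagonal.mem_antidiagonal.mpr rfl) ?_ ?_ ?_
      · exact mul_ne_zero hco₀.1 (pow_ne_zero _ hQ0)
      · obtain ⟨-, -, hval⟩ := hr_val i₀ j₀ hco₀.1
        rw [hval (i₀ + j₀) rfl, hi₀eq, hj₀eq]
      · intro p hp hpne hne
        have hab := Finset.HasAntidiagonal.mem_antidiagonal.mp hp
        have hrr : (((qCoeff Q f) p.1 * (qCoeff Q g) p.2) %ₘ Q) ≠ 0 := by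
          intro h0; apply hne; rw [h0, zero_mul]
        obtain ⟨hFa, hGb, hval⟩ := hr_val p.1 p.2 hrr
        rw [hval (i₀ + j₀) hab]
        have hcase : p.1 < i₀ ∨ p.2 < j₀ := by
          by_contra hcon
          push_neg at hcon
          apply hpne
          have h1 : p.1 = i₀ := by omega
          have h2 : p.2 = j₀ := by omega
          exact Prod.ext h1 h2
        rcases hcase with hlt | hlt
        · have h1 := hi₀min p.1 hFa hlt
          have h2 := hGv p.2 hGb
          linarith
        · have h1 := hj₀min p.2 hGb hlt
          have h2 := hFv p.1 hFa
          linarith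
    have hYbound : (if i₀ + j₀ = 0 then (0 : Polynomial K) else
        ∑ p ∈ Finset.HasAntidiagonal.antidiagonal (i₀ + j₀ - 1), (((qCoeff Q f) p.1 * (qCoeff Q g) p.2) /ₘ Q) * Q ^ (i₀ + j₀)) ≠ 0 →
        tf + tg < ν (if i₀ + j₀ = 0 then (0 : Polynomial K) else
        ∑ p ∈ Finset.HasAntidiagonal.antidiagonal (i₀ + j₀ - 1), (((qCoeff Q f) p.1 * (qCoeff Q g) p.2) /ₘ Q) * Q ^ (i₀ + j₀)) := by
      intro hYne
      rcases eq_or_ne (i₀ + j₀) 0 with h0 | h0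
      · rw [if_pos h0] at hYne
        exact absurd rfl hYne
      rw [if_neg h0] at hYne ⊢
      have key : ∀ p ∈ Finset.HasAntidiagonal.antidiagonal (i₀ + j₀ - 1),
          (((qCoeff Q f) p.1 * (qCoeff Q g) p.2) /ₘ Q) * Q ^ (i₀ + j₀) ≠ 0 →
          tf + tg < ν ((((qCoeff Q f) p.1 * (qCoeff Q g) p.2) /ₘ Q) * Q ^ (i₀ + j₀)) := by
        intro p hp hne
        have hab := Finset.HasAntidiagonal.mem_antidiagonal.mp hp
        have hcc : (((qCoeff Q f) p.1 * (qCoeff Q g) p.2) /ₘ Q) ≠ 0 := by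
          intro hh; apply hne; rw [hh, zero_mul]
        have hlt := hc_val p.1 p.2 hcc (i₀ + j₀) (by omega)
        have hne2 : (qCoeff Q f) p.1 * (qCoeff Q g) p.2 ≠ 0 := by
          intro hh; apply hcc; rw [hh, Polynomial.zero_divByMonic]
        obtain ⟨hFa, hGb⟩ := mul_ne_zero_iff.mp hne2
        have h1 := hFv p.1 hFa
        have h2 := hGv p.2 hGb
        linarith
      exact (nu_sum_gt hν _ _ _ key).resolve_left hYne
    have hfin := nu_add_eq_left hν hX.1 hX.2 hYbound
    rw [← hAQ (i₀ + j₀)] at hfin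
    have hqk := hqc (i₀ + j₀) hk₀M
    have hAne : qCoeff Q (f * g) (i₀ + j₀) ≠ 0 := by
      intro h0
      rw [hqk] at h0
      exact hfin.1 (by rw [h0, zero_mul])
    have htl := trunc_le (ν := ν) hQm hd1 hAne
    rw [hqk, hfin.2] at htl
    exact htl
  exact le_antisymm hle2 hge2

end TruncAux

variable {K : Type*} [Field K] {Γ : Type*} [Field Γ] [LinearOrder Γ] [IsStrictOrderedRing Γ]

/-- If `Q` is a key polynomial, then the truncation `ν_Q` is a valuation:
it is multiplicative and satisfies the ultrametric inequality. -/
theorem trunc_isValuation (ν : Polynomial K → Γ) (hν : IsVal ν)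
    (Q : Polynomial K) (hQ : IsKeyPol ν Q) :
    (∀ f g : Polynomial K, f ≠ 0 → g ≠ 0 →
      truncVal ν Q (f * g) = truncVal ν Q f + truncVal ν Q g) ∧
    (∀ f g : Polynomial K, f ≠ 0 → g ≠ 0 → f + g ≠ 0 →
      min (truncVal ν Q f) (truncVal ν Q g) ≤ truncVal ν Q (f + g)) := by
  exact ⟨fun f g hf hg => TruncAux.trunc_mul hν hQ hf hg,
    fun f g hf hg hfg => TruncAux.trunc_add hν hQ hf hg hfg⟩
end
end

section
/- Let Q be a key polynomial, ε := ε(Q), and h ∈ K[x] with deg(h) < deg(Q). For b ∈ ℕ and nonnegative integers b_0, ..., b_r with b_0 + ... + b_r = b (b_1,...,b_r ≥ 1), set T_b(b_0,...,b_r) := ∂_{b_0}h · (Π_{i=1}^r ∂_{b_i}Q) · Q^{n-r}. Then ν_Q(T_b(b_0,...,b_r)) ≥ ν(hQ^n) - bε, with strict inequality if b_0 > 0 or if some b_i ∉ I(Q). -/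
open Polynomial
open scoped Classical
noncomputable section

namespace KeyPolAux

open Finset

variable {K : Type*} [Field K] {Γ : Type*} [Field Γ] [LinearOrder Γ] [IsStrictOrderedRing Γ]
variable {ν : Polynomial K → Γ} {Q : Polynomial K}

lemma nu_one (hν : IsVal ν) : ν 1 = 0 := by
  have h := hν.map_mul 1 1 one_ne_zero one_ne_zero
  rw [one_mul] at h; linarith

lemma nu_neg (hν : IsVal ν) {f : Polynomial K} (hf : f ≠ 0) : ν (-f) = ν f := by
  have h1 : ν ((-1 : Polynomial K) * (-1)) = ν (-1) + ν (-1) :=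
    hν.map_mul _ _ (by norm_num) (by norm_num)
  rw [neg_mul_neg, one_mul, nu_one hν] at h1
  have h2 : ν ((-1 : Polynomial K) * f) = ν (-1) + ν f :=
    hν.map_mul _ _ (by norm_num) hf
  rw [neg_one_mul] at h2
  rw [h2]; linarith

lemma nu_add_lt (hν : IsVal ν) {f g : Polynomial K} (hf : f ≠ 0) (hg : g ≠ 0)
    (hlt : ν f < ν g) : f + g ≠ 0 ∧ ν (f + g) = ν f := by
  have hne : f + g ≠ 0 := by
    intro h0
    have : f = -g := by linear_combination h0
    rw [this, nu_neg hν hg] at hlt; exact lt_irrefl _ hlt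
  have h1 : ν f ≤ ν (f + g) := by
    have := hν.map_add f g hf hg hne
    rwa [min_eq_left hlt.le] at this
  refine ⟨hne, le_antisymm ?_ h1⟩
  have h2 := hν.map_add (f + g) (-g) hne (neg_ne_zero.mpr hg) (by simpa using hf)
  rw [add_neg_cancel_right, nu_neg hν hg] at h2
  by_contra hc
  push_neg at hc
  rcases min_le_iff.mp h2 with h | h <;> linarith

lemma nu_pow (hν : IsVal ν) {f : Polynomial K} (hf : f ≠ 0) (n : ℕ) :
    ν (f ^ n) = (n : Γ) * ν f := by
  induction n with
  | zero => simpa using nu_one hν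
  | succ n ih =>
    rw [pow_succ, hν.map_mul _ _ (pow_ne_zero n hf) hf, ih]
    push_cast; ring

lemma nu_mul_pow (hν : IsVal ν) {x f : Polynomial K} (hx : x ≠ 0) (hf : f ≠ 0)
    (j : ℕ) : ν (x * f ^ j) = ν x + (j : Γ) * ν f := by
  rw [hν.map_mul _ _ hx (pow_ne_zero j hf), nu_pow hν hf]

lemma nu_prod (hν : IsVal ν) {ι : Type*} (s : Finset ι) (F : ι → Polynomial K)
    (h : ∀ i ∈ s, F i ≠ 0) : ν (∏ i ∈ s, F i) = ∑ i ∈ s, ν (F i) := by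
  induction s using Finset.cons_induction with
  | empty => simpa using nu_one hν
  | cons a s ha ih =>
    rw [Finset.prod_cons, Finset.sum_cons,
      hν.map_mul _ _ (h a (Finset.mem_cons_self a s))
        (Finset.prod_ne_zero_iff.mpr fun i hi => h i (Finset.mem_cons_of_mem hi)),
      ih fun i hi => h i (Finset.mem_cons_of_mem hi)]

/-- the predicate "zero or value above `t`", closed under sums. -/
lemma nu_sum_lt (hν : IsVal ν) {ι : Type*} (t : Γ) (s : Finset ι)
    (F : ι → Polynomial K) (h : ∀ i ∈ s, F i = 0 ∨ t < ν (F i)) :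
    (∑ i ∈ s, F i) = 0 ∨ t < ν (∑ i ∈ s, F i) := by
  induction s using Finset.cons_induction with
  | empty => simp
  | cons a s ha ih =>
    rw [Finset.sum_cons]
    have hx := h a (Finset.mem_cons_self a s)
    have hS := ih fun i hi => h i (Finset.mem_cons_of_mem hi)
    by_cases hxz : F a = 0
    · simpa [hxz] using hS
    have hx' : t < ν (F a) := hx.resolve_left hxz
    by_cases hSz : (∑ i ∈ s, F i) = 0
    · simp only [hSz, add_zero]; right; exact hx'
    have hS' : t < ν (∑ i ∈ s, F i) := hS.resolve_left hSz
    by_cases h0 : F a + ∑ i ∈ s, F i = 0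
    · exact Or.inl h0
    · right
      have := hν.map_add _ _ hxz hSz h0
      exact lt_of_lt_of_le (lt_min hx' hS') this

end KeyPolAux
namespace KeyPolAux

open Finset

variable {K : Type*} [Field K] {Γ : Type*} [Field Γ] [LinearOrder Γ] [IsStrictOrderedRing Γ]
variable {ν : Polynomial K → Γ} {Q : Polynomial K}

lemma le_natDegree_of_hD {f : Polynomial K} {b : ℕ}
    (h : Polynomial.hasseDeriv b f ≠ 0) : b ≤ f.natDegree := by
  by_contra hb
  exact h (f.hasseDeriv_eq_zero_of_lt_natDegree b (by omega))

lemma ratio_le_eps (ν : Polynomial K → Γ) {f : Polynomial K} {b : ℕ}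
    (hb : 1 ≤ b) (hD : Polynomial.hasseDeriv b f ≠ 0) :
    (ν f - ν (Polynomial.hasseDeriv b f)) / (b : Γ) ≤ eps ν f := by
  have hmem : b ∈ (Finset.Icc 1 f.natDegree).filter
      fun b => Polynomial.hasseDeriv b f ≠ 0 :=
    Finset.mem_filter.mpr ⟨Finset.mem_Icc.mpr ⟨hb, le_natDegree_of_hD hD⟩, hD⟩
  rw [eps, dif_pos ⟨b, hmem⟩]
  exact Finset.le_sup' (fun b => (ν f - ν (Polynomial.hasseDeriv b f)) / (b : Γ)) hmem

lemma hasse_ge (ν : Polynomial K → Γ) {f : Polynomial K} {b : ℕ}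
    (hD : Polynomial.hasseDeriv b f ≠ 0) :
    ν f - (b : Γ) * eps ν f ≤ ν (Polynomial.hasseDeriv b f) := by
  rcases Nat.eq_zero_or_pos b with rfl | hb
  · simp [Polynomial.hasseDeriv_zero']
  · have := ratio_le_eps ν hb hD
    rw [div_le_iff₀ (by exact_mod_cast hb : (0:Γ) < (b:Γ))] at this
    linarith [this]

lemma eps_lt_of_small (hQ : IsKeyPol ν Q) {f : Polynomial K}
    (hf1 : 1 ≤ f.natDegree) (hfd : f.natDegree < Q.natDegree) :
    eps ν f < eps ν Q := by
  by_contra hc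
  push_neg at hc
  exact absurd (hQ.2.2 f hf1 hc) (by omega)

/-- value bound on Hasse derivatives of small-degree polynomials, strict for `b ≥ 1`. -/
lemma hasse_ge_small (hQ : IsKeyPol ν Q) {f : Polynomial K} {b : ℕ}
    (hfd : f.natDegree < Q.natDegree) (hD : Polynomial.hasseDeriv b f ≠ 0) :
    (ν f - (b : Γ) * eps ν Q ≤ ν (Polynomial.hasseDeriv b f)) ∧
    (1 ≤ b → ν f - (b : Γ) * eps ν Q < ν (Polynomial.hasseDeriv b f)) := by
  rcases Nat.eq_zero_or_pos b with rfl | hb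
  · constructor
    · simp [Polynomial.hasseDeriv_zero']
    · omega
  · have hf1 : 1 ≤ f.natDegree := le_trans hb (le_natDegree_of_hD hD)
    have h1 := hasse_ge ν hD
    have h2 := eps_lt_of_small hQ hf1 hfd
    have hbpos : (0:Γ) < (b:Γ) := by exact_mod_cast hb
    have : (b : Γ) * eps ν f < (b : Γ) * eps ν Q := by
      exact (mul_lt_mul_iff_right₀ hbpos).mpr h2
    exact ⟨by linarith, fun _ => by linarith⟩

/-- strict bound for `b ∉ I(Q)`. -/
lemma hasse_Q_notI (hQ : IsKeyPol ν Q) {b : ℕ} (hb : 1 ≤ b)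
    (hD : Polynomial.hasseDeriv b Q ≠ 0) (hI : b ∉ Iset ν Q) :
    ν Q - (b : Γ) * eps ν Q < ν (Polynomial.hasseDeriv b Q) := by
  have hrat := ratio_le_eps ν hb hD
  have hne : (ν Q - ν (Polynomial.hasseDeriv b Q)) / (b : Γ) ≠ eps ν Q := by
    intro he; exact hI ⟨hb, hD, he⟩
  have hbpos : (0:Γ) < (b:Γ) := by exact_mod_cast hb
  have := lt_of_le_of_ne hrat hne
  rw [div_lt_iff₀ hbpos] at this
  linarith

/-- existence of `b ∈ I(Q)`: the `eps` maximum is attained. -/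
lemma exists_I (ν : Polynomial K → Γ) (hQ : IsKeyPol ν Q) :
    ∃ b : ℕ, 1 ≤ b ∧ Polynomial.hasseDeriv b Q ≠ 0 ∧
      ν (Polynomial.hasseDeriv b Q) = ν Q - (b : Γ) * eps ν Q := by
  have hQ0 : Q ≠ 0 := hQ.1.ne_zero
  have hDtop : Polynomial.hasseDeriv Q.natDegree Q ≠ 0 := by
    intro h0
    have : (Polynomial.hasseDeriv Q.natDegree Q).coeff 0 = 1 := by
      rw [Polynomial.hasseDeriv_coeff]
      simp [hQ.1.coeff_natDegree]
    rw [h0] at this; simp at this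
  have hmem : Q.natDegree ∈ (Finset.Icc 1 Q.natDegree).filter
      fun b => Polynomial.hasseDeriv b Q ≠ 0 :=
    Finset.mem_filter.mpr ⟨Finset.mem_Icc.mpr ⟨hQ.2.1, le_refl _⟩, hDtop⟩
  have hne : ((Finset.Icc 1 Q.natDegree).filter
      fun b => Polynomial.hasseDeriv b Q ≠ 0).Nonempty := ⟨_, hmem⟩
  obtain ⟨b, hbmem, hbeq⟩ := Finset.exists_mem_eq_sup' hne
    fun b => (ν Q - ν (Polynomial.hasseDeriv b Q)) / (b : Γ)
  obtain ⟨hbIcc, hbD⟩ := Finset.mem_filter.mp hbmem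
  have hb1 : 1 ≤ b := (Finset.mem_Icc.mp hbIcc).1
  have heps : eps ν Q = (ν Q - ν (Polynomial.hasseDeriv b Q)) / (b : Γ) := by
    rw [eps, dif_pos hne]; exact hbeq
  refine ⟨b, hb1, hbD, ?_⟩
  have hbpos : (0:Γ) < (b:Γ) := by exact_mod_cast hb1
  rw [heps]
  field_simp
  ring

end KeyPolAux
namespace KeyPolAux

open Finset

variable {K : Type*} [Field K] {Γ : Type*} [Field Γ] [LinearOrder Γ] [IsStrictOrderedRing Γ]
variable {ν : Polynomial K → Γ} {Q : Polynomial K}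

lemma nu_or_add (hν : IsVal ν) {t : Γ} {x y : Polynomial K}
    (hx : x = 0 ∨ t < ν x) (hy : y = 0 ∨ t < ν y) :
    x + y = 0 ∨ t < ν (x + y) := by
  by_cases hxz : x = 0
  · simpa [hxz] using hy
  have hx' : t < ν x := hx.resolve_left hxz
  by_cases hyz : y = 0
  · simpa [hyz] using hx
  have hy' : t < ν y := hy.resolve_left hyz
  by_cases h0 : x + y = 0
  · exact Or.inl h0
  · exact Or.inr (lt_of_lt_of_le (lt_min hx' hy') (hν.map_add x y hxz hyz h0))

lemma mod_div_bound (hν : IsVal ν) (hQ : IsKeyPol ν Q) {f g : Polynomial K}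
    (hf : f ≠ 0) (hg : g ≠ 0) (hfd : f.natDegree < Q.natDegree)
    (hgd : g.natDegree < Q.natDegree) :
    ((f * g) %ₘ Q ≠ 0 → ν f + ν g ≤ ν ((f * g) %ₘ Q)) ∧
    ((f * g) /ₘ Q ≠ 0 → ν f + ν g ≤ ν ((f * g) /ₘ Q) + ν Q) := by
  have hQm := hQ.1
  have hQ0 : Q ≠ 0 := hQm.ne_zero
  have hQd : 1 ≤ Q.natDegree := hQ.2.1
  have hfg : f * g ≠ 0 := mul_ne_zero hf hg
  set a := (f * g) %ₘ Q with ha_def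
  set c := (f * g) /ₘ Q with hc_def
  have hsum : a + Q * c = f * g := modByMonic_add_div (f*g) Q
  have hνfg : ν (f * g) = ν f + ν g := hν.map_mul f g hf hg
  by_cases hc0 : c = 0
  · have haeq : a = f * g := by rw [← hsum, hc0, mul_zero, add_zero]
    exact ⟨fun _ => by rw [haeq, hνfg], fun hcc => absurd hc0 hcc⟩
  by_cases ha0 : a = 0
  · have hQceq : Q * c = f * g := by rw [← hsum, ha0, zero_add]
    have heq : ν Q + ν c = ν f + ν g := by
      rw [← hν.map_mul Q c hQ0 hc0, hQceq, hνfg]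
    exact ⟨fun haa => absurd ha0 haa, fun _ => by linarith⟩
  -- both `a` and `c` nonzero
  have hQc : Q * c ≠ 0 := mul_ne_zero hQ0 hc0
  have hνQc : ν (Q * c) = ν Q + ν c := hν.map_mul Q c hQ0 hc0
  have hmain : ν f + ν g ≤ min (ν a) (ν (Q * c)) := by
    by_contra hcon
    push_neg at hcon
    have hkey : ν a = ν (Q * c) ∧ ν a < ν (f * g) := by
      rcases lt_trichotomy (ν a) (ν (Q * c)) with hlt | heq | hgt
      · obtain ⟨_, he⟩ := nu_add_lt hν ha0 hQc hlt
        rw [hsum, hνfg] at he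
        rw [min_eq_left hlt.le] at hcon
        exfalso; linarith
      · refine ⟨heq, ?_⟩
        rw [min_eq_left heq.le] at hcon
        rw [hνfg]; exact hcon
      · obtain ⟨_, he⟩ := nu_add_lt hν hQc ha0 hgt
        rw [add_comm, hsum, hνfg] at he
        rw [min_eq_right hgt.le] at hcon
        exfalso; linarith
    -- the Hasse-derivative argument
    obtain ⟨b, hb1, hbD, hbeq⟩ := exists_I ν hQ
    set e := eps ν Q with he_def
    set t : Γ := ν a - (b : Γ) * e with ht_def
    have hcd : c.natDegree < Q.natDegree := by
      have hnd := natDegree_divByMonic (f*g) hQm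
      rw [natDegree_mul hf hg] at hnd
      rw [← hc_def] at hnd
      omega
    have had : a.natDegree < Q.natDegree :=
      natDegree_lt_natDegree ha0 (by rw [ha_def]; exact degree_modByMonic_lt (f*g) hQm)
    have hmem00 : ((b, 0) : ℕ × ℕ) ∈ Finset.HasAntidiagonal.antidiagonal b :=
      Finset.HasAntidiagonal.mem_antidiagonal.mpr (by omega)
    have h2 : hasseDeriv b (Q * c) = hasseDeriv b Q * c +
        ∑ ij ∈ (Finset.HasAntidiagonal.antidiagonal b).erase (b,0),
          hasseDeriv ij.1 Q * hasseDeriv ij.2 c := by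
      rw [Polynomial.hasseDeriv_mul, ← Finset.add_sum_erase _ _ hmem00]
      simp [Polynomial.hasseDeriv_zero']
    have hDa' : hasseDeriv b a + hasseDeriv b Q * c = hasseDeriv b (f*g) +
        ∑ ij ∈ (Finset.HasAntidiagonal.antidiagonal b).erase (b,0),
          -(hasseDeriv ij.1 Q * hasseDeriv ij.2 c) := by
      have h1 : a = f*g - Q*c := by rw [← hsum]; ring
      rw [h1, map_sub, h2, Finset.sum_neg_distrib]
      ring
    have hWfg : hasseDeriv b (f*g) = 0 ∨ t < ν (hasseDeriv b (f*g)) := by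
      rw [Polynomial.hasseDeriv_mul]
      apply nu_sum_lt hν
      intro ij hij
      by_cases hz : hasseDeriv ij.1 f * hasseDeriv ij.2 g = 0
      · exact Or.inl hz
      right
      have hif : hasseDeriv ij.1 f ≠ 0 := left_ne_zero_of_mul hz
      have hjg : hasseDeriv ij.2 g ≠ 0 := right_ne_zero_of_mul hz
      have h1 := (hasse_ge_small hQ hfd hif).1
      have h2' := (hasse_ge_small hQ hgd hjg).1
      have hijs : ij.1 + ij.2 = b := Finset.HasAntidiagonal.mem_antidiagonal.mp hij
      have hbe : (ij.1 : Γ) * e + (ij.2 : Γ) * e = (b : Γ) * e := by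
        rw [← add_mul, ← Nat.cast_add, hijs]
      rw [hν.map_mul _ _ hif hjg]
      have hva := hkey.2
      rw [hνfg] at hva
      linarith
    have hWer : (∑ ij ∈ (Finset.HasAntidiagonal.antidiagonal b).erase (b,0),
        -(hasseDeriv ij.1 Q * hasseDeriv ij.2 c)) = 0 ∨
        t < ν (∑ ij ∈ (Finset.HasAntidiagonal.antidiagonal b).erase (b,0),
          -(hasseDeriv ij.1 Q * hasseDeriv ij.2 c)) := by
      apply nu_sum_lt hν
      intro ij hij
      by_cases hz : hasseDeriv ij.1 Q * hasseDeriv ij.2 c = 0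
      · rw [hz]; exact Or.inl neg_zero
      right
      have hiQ : hasseDeriv ij.1 Q ≠ 0 := left_ne_zero_of_mul hz
      have hjc : hasseDeriv ij.2 c ≠ 0 := right_ne_zero_of_mul hz
      have hijmem' : ij ∈ Finset.HasAntidiagonal.antidiagonal b := (Finset.mem_erase.mp hij).2
      have hijne' : ij ≠ (b, 0) := (Finset.mem_erase.mp hij).1
      have hijs : ij.1 + ij.2 = b := Finset.HasAntidiagonal.mem_antidiagonal.mp hijmem'
      have hj1 : 1 ≤ ij.2 := by
        rcases Nat.eq_zero_or_pos ij.2 with hj0 | h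
        · exfalso; apply hijne'; ext <;> simp [hj0] <;> omega
        · exact h
      have h1 := hasse_ge ν hiQ
      have h2' := (hasse_ge_small hQ hcd hjc).2 hj1
      have hbe : (ij.1 : Γ) * e + (ij.2 : Γ) * e = (b : Γ) * e := by
        rw [← add_mul, ← Nat.cast_add, hijs]
      rw [nu_neg hν hz, hν.map_mul _ _ hiQ hjc]
      have hva : ν a = ν Q + ν c := by rw [hkey.1, hνQc]
      linarith
    have hX : hasseDeriv b Q * c ≠ 0 := mul_ne_zero hbD hc0
    have hνX : ν (hasseDeriv b Q * c) = t := by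
      rw [hν.map_mul _ _ hbD hc0, hbeq]
      have hva : ν a = ν Q + ν c := by rw [hkey.1, hνQc]
      linarith
    set W := hasseDeriv b (f*g) + ∑ ij ∈ (Finset.HasAntidiagonal.antidiagonal b).erase (b,0),
          -(hasseDeriv ij.1 Q * hasseDeriv ij.2 c) with hW_def
    have hWor : W = 0 ∨ t < ν W := nu_or_add hν hWfg hWer
    have hDab : hasseDeriv b a ≠ 0 ∧ ν (hasseDeriv b a) = t := by
      by_cases hW0 : W = 0
      · have h3 : hasseDeriv b a + hasseDeriv b Q * c = 0 := by
          rw [hDa']; exact hW0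
        have hda : hasseDeriv b a = -(hasseDeriv b Q * c) := by
          linear_combination h3
        refine ⟨by rw [hda]; exact neg_ne_zero.mpr hX, ?_⟩
        rw [hda, nu_neg hν hX, hνX]
      · have hWv : t < ν W := hWor.resolve_left hW0
        have hda : hasseDeriv b a = -(hasseDeriv b Q * c) + W := by
          linear_combination hDa'
        have hνnX : ν (-(hasseDeriv b Q * c)) = t := by rw [nu_neg hν hX, hνX]
        obtain ⟨hne, heq⟩ := nu_add_lt hν (neg_ne_zero.mpr hX) hW0
          (by rw [hνnX]; exact hWv)
        rw [← hda] at hne heq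
        exact ⟨hne, by rw [heq, hνnX]⟩
    have hble : b ≤ a.natDegree := le_natDegree_of_hD hDab.1
    have h1a : 1 ≤ a.natDegree := le_trans hb1 hble
    have hrat := ratio_le_eps ν hb1 hDab.1
    rw [hDab.2] at hrat
    have hbpos : (0:Γ) < (b:Γ) := by exact_mod_cast hb1
    have hbne : (b:Γ) ≠ 0 := ne_of_gt hbpos
    have hsimp : (ν a - t) / (b : Γ) = e := by
      rw [ht_def]; field_simp
      ring
    rw [hsimp] at hrat
    exact absurd (hQ.2.2 a h1a hrat) (by omega)
  exact ⟨fun _ => hmain.trans (min_le_left _ _),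
    fun _ => by have := hmain.trans (min_le_right _ _); rw [hνQc] at this; linarith⟩

end KeyPolAux
namespace KeyPolAux

open Finset

variable {K : Type*} [Field K] {Γ : Type*} [Field Γ] [LinearOrder Γ] [IsStrictOrderedRing Γ]
variable {ν : Polynomial K → Γ} {Q : Polynomial K}

lemma degree_lt_degree_of {p : Polynomial K} (hQ0 : Q ≠ 0)
    (h : p ≠ 0 → p.natDegree < Q.natDegree) : p.degree < Q.degree := by
  by_cases hp : p = 0
  · rw [hp, Polynomial.degree_zero, Polynomial.degree_eq_natDegree hQ0]
    exact WithBot.bot_lt_coe _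
  · rw [Polynomial.degree_eq_natDegree hp, Polynomial.degree_eq_natDegree hQ0]
    exact_mod_cast h hp

lemma divByMonic_pow_succ (hQm : Q.Monic) (f : Polynomial K) (j : ℕ) :
    f /ₘ Q ^ (j + 1) = (f /ₘ Q) /ₘ Q ^ j := by
  have hQ0 : Q ≠ 0 := hQm.ne_zero
  refine (div_modByMonic_unique ((f /ₘ Q) /ₘ Q ^ j)
      (Q * ((f /ₘ Q) %ₘ Q ^ j) + f %ₘ Q) (hQm.pow (j+1)) ⟨?_, ?_⟩).1
  · conv_rhs => rw [← modByMonic_add_div f Q,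
      ← modByMonic_add_div (f /ₘ Q) (Q ^ j)]
    ring
  · have hpow0 : Q ^ (j+1) ≠ 0 := pow_ne_zero _ hQ0
    have hd1 : (Q * ((f /ₘ Q) %ₘ Q ^ j)).degree < (Q ^ (j+1)).degree := by
      rcases eq_or_ne ((f /ₘ Q) %ₘ Q ^ j) 0 with h0 | h0
      · rw [h0, mul_zero, Polynomial.degree_zero,
          Polynomial.degree_eq_natDegree hpow0]
        exact WithBot.bot_lt_coe _
      · rw [Polynomial.degree_mul]
        have hlt : ((f /ₘ Q) %ₘ Q ^ j).degree < (Q ^ j).degree :=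
          degree_modByMonic_lt _ (hQm.pow j)
        calc Q.degree + ((f /ₘ Q) %ₘ Q ^ j).degree
            < Q.degree + (Q ^ j).degree := by
              apply WithBot.add_lt_add_left
              · rw [Polynomial.degree_eq_natDegree hQ0]; exact WithBot.coe_ne_bot
              · exact hlt
          _ = (Q ^ (j+1)).degree := by
              rw [← Polynomial.degree_mul, ← pow_succ']
    have hd0 : (f %ₘ Q).degree < (Q ^ (j+1)).degree := by
      calc (f %ₘ Q).degree < Q.degree := degree_modByMonic_lt f hQm
        _ ≤ (Q ^ (j+1)).degree := by
            rw [Polynomial.degree_eq_natDegree hQ0,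
              Polynomial.degree_eq_natDegree hpow0, hQm.natDegree_pow]
            exact_mod_cast Nat.le_mul_of_pos_left Q.natDegree (Nat.succ_pos j)
    exact lt_of_le_of_lt (Polynomial.degree_add_le _ _) (max_lt hd1 hd0)

lemma expand_divMod (hQm : Q.Monic) (M : ℕ) (d : ℕ → Polynomial K)
    (hd : ∀ k, d k ≠ 0 → (d k).natDegree < Q.natDegree) :
    (∑ k ∈ Finset.range (M+1), d k * Q ^ k) /ₘ Q =
      ∑ k ∈ Finset.range M, d (k+1) * Q ^ k ∧
    (∑ k ∈ Finset.range (M+1), d k * Q ^ k) %ₘ Q = d 0 := by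
  have hQ0 : Q ≠ 0 := hQm.ne_zero
  refine div_modByMonic_unique _ (d 0) hQm ⟨?_, degree_lt_degree_of hQ0 (hd 0)⟩
  rw [Finset.sum_range_succ', Finset.mul_sum]
  simp only [pow_zero, mul_one]
  rw [add_comm]
  congr 1
  exact Finset.sum_congr rfl fun k _ => by ring

lemma qCoeff_eq (hQm : Q.Monic) :
    ∀ (j N : ℕ) (d : ℕ → Polynomial K) (f : Polynomial K),
      (∀ k, d k ≠ 0 → (d k).natDegree < Q.natDegree) →
      f = ∑ k ∈ Finset.range N, d k * Q ^ k →
      qCoeff Q f j = if j < N then d j else 0 := by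
  intro j
  induction j with
  | zero =>
    intro N d f hd hf
    rw [qCoeff, pow_zero, divByMonic_one]
    cases N with
    | zero =>
      simp only [Finset.range_zero, Finset.sum_empty] at hf
      simp [hf]
    | succ M =>
      rw [hf, (expand_divMod hQm M d hd).2]
      simp
  | succ j ih =>
    intro N d f hd hf
    have hstep : qCoeff Q f (j+1) = qCoeff Q (f /ₘ Q) j := by
      rw [qCoeff, qCoeff, divByMonic_pow_succ hQm]
    rw [hstep]
    cases N with
    | zero =>
      simp only [Finset.range_zero, Finset.sum_empty] at hf
      rw [ih 0 d (f /ₘ Q) hd (by simp [hf])]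
      simp
    | succ M =>
      have hdiv : f /ₘ Q = ∑ k ∈ Finset.range M, d (k+1) * Q ^ k := by
        rw [hf]; exact (expand_divMod hQm M d hd).1
      rw [ih M (fun k => d (k+1)) (f /ₘ Q) (fun k => hd (k+1)) hdiv]
      by_cases hj : j < M
      · simp [hj, Nat.succ_lt_succ hj]
      · simp [hj, fun hc => hj (Nat.lt_of_succ_lt_succ hc)]

lemma qCoeff_le_natDegree (hQm : Q.Monic) (hQd : 1 ≤ Q.natDegree)
    {f : Polynomial K} {j : ℕ} (h : qCoeff Q f j ≠ 0) :
    j ≤ f.natDegree := by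
  have hdiv : f /ₘ Q ^ j ≠ 0 := fun h0 => h (by rw [qCoeff, h0, zero_modByMonic])
  have hnlt : ¬ f.degree < (Q ^ j).degree :=
    fun hlt => hdiv ((divByMonic_eq_zero_iff (hQm.pow j)).mpr hlt)
  have hnd : (Q ^ j).natDegree ≤ f.natDegree :=
    Polynomial.natDegree_le_natDegree (le_of_not_gt hnlt)
  rw [hQm.natDegree_pow] at hnd
  nlinarith [hnd, hQd]

end KeyPolAux
namespace KeyPolAux

open Finset

variable {K : Type*} [Field K] {Γ : Type*} [Field Γ] [LinearOrder Γ] [IsStrictOrderedRing Γ]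
variable {ν : Polynomial K → Γ} {Q : Polynomial K}

lemma expand_prod (hν : IsVal ν) (hQ : IsKeyPol ν Q) :
    ∀ (m : ℕ) (p : Fin m → Polynomial K), (∀ i, p i ≠ 0) →
      (∀ i, (p i).natDegree < Q.natDegree) →
      ∃ (N : ℕ) (d : ℕ → Polynomial K),
        (∏ i, p i) = ∑ k ∈ Finset.range N, d k * Q ^ k ∧
        (∀ k, d k ≠ 0 → (d k).natDegree < Q.natDegree) ∧
        (∀ k, d k ≠ 0 → (∑ i, ν (p i)) ≤ ν (d k * Q ^ k)) := by
  have hQm := hQ.1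
  have hQ0 : Q ≠ 0 := hQm.ne_zero
  have hQD : 1 ≤ Q.natDegree := hQ.2.1
  intro m
  induction m with
  | zero =>
    intro p _ _
    refine ⟨1, fun k => if k = 0 then 1 else 0, by simp, ?_, ?_⟩
    · intro k hk
      by_cases h : k = 0
      · simpa [h] using (Nat.pos_of_ne_zero (by omega) : 0 < Q.natDegree)
      · simp [h] at hk
    · intro k hk
      by_cases h : k = 0
      · simp [h, nu_one hν]
      · simp [h] at hk
  | succ m ih =>
    intro p hp0 hpd
    obtain ⟨N, d, hsum, hdeg, hval⟩ :=
      ih (fun i => p i.succ) (fun i => hp0 _) (fun i => hpd _)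
    set dd : ℕ → Polynomial K := fun k => if k < N then d k else 0 with hdd_def
    have hddeg : ∀ k, dd k ≠ 0 → (dd k).natDegree < Q.natDegree := by
      intro k hk
      by_cases h : k < N
      · simp only [hdd_def, if_pos h] at hk ⊢; exact hdeg k hk
      · simp [hdd_def, h] at hk
    have hdval : ∀ k, dd k ≠ 0 → (∑ i : Fin m, ν (p i.succ)) ≤ ν (dd k * Q ^ k) := by
      intro k hk
      by_cases h : k < N
      · simp only [hdd_def, if_pos h] at hk ⊢; exact hval k hk
      · simp [hdd_def, h] at hk
    set A : ℕ → Polynomial K := fun k => (dd k * p 0) %ₘ Q with hA_def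
    set Cc : ℕ → Polynomial K := fun k => (dd k * p 0) /ₘ Q with hC_def
    have hAC : ∀ k, dd k * p 0 = A k + Q * Cc k :=
      fun k => (modByMonic_add_div (dd k * p 0) Q).symm
    have hAd : ∀ k, (A k).natDegree < Q.natDegree := by
      intro k
      by_cases h : A k = 0
      · rw [h]; simpa using (Nat.pos_of_ne_zero (by omega) : 0 < Q.natDegree)
      · exact natDegree_lt_natDegree h (degree_modByMonic_lt _ hQm)
    have hCd : ∀ k, (Cc k).natDegree < Q.natDegree := by
      intro k
      by_cases h : Cc k = 0
      · rw [h]; simpa using (Nat.pos_of_ne_zero (by omega) : 0 < Q.natDegree)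
      have hddk : dd k ≠ 0 := by
        intro h0
        apply h
        rw [hC_def]
        simp only [h0, zero_mul, zero_divByMonic]
      have hnd := natDegree_divByMonic (dd k * p 0) hQm
      rw [natDegree_mul hddk (hp0 0)] at hnd
      have h1 := hddeg k hddk
      have h2 := hpd 0
      have hCk : Cc k = dd k * p 0 /ₘ Q := rfl
      rw [hCk]
      omega
    -- bounds on values of the two pieces
    have hA_bound : ∀ k, A k ≠ 0 →
        ν (p 0) + (∑ i : Fin m, ν (p i.succ)) ≤ ν (A k * Q ^ k) := by
      intro k hk
      have hddk : dd k ≠ 0 := by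
        intro h0; apply hk; rw [hA_def]; simp only [h0, zero_mul, zero_modByMonic]
      have hb := (mod_div_bound hν hQ hddk (hp0 0) (hddeg k hddk) (hpd 0)).1 hk
      have h1 := hdval k hddk
      rw [nu_mul_pow hν hddk hQ0] at h1
      rw [nu_mul_pow hν hk hQ0]
      linarith
    have hC_bound : ∀ k, Cc k ≠ 0 →
        ν (p 0) + (∑ i : Fin m, ν (p i.succ)) ≤ ν (Cc k * Q ^ (k+1)) := by
      intro k hk
      have hddk : dd k ≠ 0 := by
        intro h0; apply hk; rw [hC_def]; simp only [h0, zero_mul, zero_divByMonic]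
      have hb := (mod_div_bound hν hQ hddk (hp0 0) (hddeg k hddk) (hpd 0)).2 hk
      have h1 := hdval k hddk
      rw [nu_mul_pow hν hddk hQ0] at h1
      rw [nu_mul_pow hν hk hQ0]
      push_cast
      linarith
    refine ⟨N + 1, fun k => A k + if k = 0 then 0 else Cc (k - 1), ?_, ?_, ?_⟩
    · have key : p 0 * (∑ k ∈ Finset.range N, d k * Q ^ k) =
          ∑ k ∈ Finset.range (N+1),
            (A k + if k = 0 then 0 else Cc (k - 1)) * Q ^ k := by
        have h1 : (∑ k ∈ Finset.range N, d k * Q ^ k) =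
            ∑ k ∈ Finset.range N, dd k * Q ^ k :=
          Finset.sum_congr rfl fun k hk => by
            rw [hdd_def]; simp [Finset.mem_range.mp hk]
        rw [h1, Finset.mul_sum]
        have h2 : ∑ k ∈ Finset.range N, p 0 * (dd k * Q ^ k) =
            ∑ k ∈ Finset.range N, (A k * Q ^ k + Cc k * Q ^ (k+1)) :=
          Finset.sum_congr rfl fun k _ => by
            calc p 0 * (dd k * Q ^ k) = (dd k * p 0) * Q ^ k := by ring
              _ = (A k + Q * Cc k) * Q ^ k := by rw [← hAC k]
              _ = A k * Q ^ k + Cc k * Q ^ (k+1) := by ring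
        rw [h2, Finset.sum_add_distrib]
        have h3 : ∑ k ∈ Finset.range (N+1),
            (A k + if k = 0 then 0 else Cc (k - 1)) * Q ^ k =
            (∑ k ∈ Finset.range (N+1), A k * Q ^ k) +
            ∑ k ∈ Finset.range (N+1), (if k = 0 then 0 else Cc (k - 1)) * Q ^ k := by
          rw [← Finset.sum_add_distrib]
          exact Finset.sum_congr rfl fun k _ => by ring
        have hAN : A N = 0 := by
          rw [hA_def]; simp [hdd_def]
        have h4 : ∑ k ∈ Finset.range (N+1),
            (if k = 0 then 0 else Cc (k - 1)) * Q ^ k =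
            ∑ k ∈ Finset.range N, Cc k * Q ^ (k+1) := by
          rw [Finset.sum_range_succ']
          simp
        rw [h3, h4, Finset.sum_range_succ, hAN]
        ring
      rw [Fin.prod_univ_succ, hsum, key]
    · intro k _
      refine lt_of_le_of_lt (natDegree_add_le _ _) (max_lt (hAd k) ?_)
      by_cases h : k = 0
      · simpa [h] using (Nat.pos_of_ne_zero (by omega) : 0 < Q.natDegree)
      · simpa [h] using hCd (k-1)
    · intro k hk
      rw [Fin.sum_univ_succ]
      rcases Nat.eq_zero_or_pos k with rfl | hkpos
      · simp only [reduceIte, add_zero] at hk ⊢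
        exact hA_bound 0 hk
      have hkne : k ≠ 0 := by omega
      obtain ⟨k', rfl⟩ : ∃ k', k = k' + 1 := ⟨k - 1, by omega⟩
      simp only [if_neg hkne, Nat.add_sub_cancel] at hk ⊢
      by_cases hA0 : A (k'+1) = 0
      · rw [hA0, zero_add] at hk ⊢
        exact hC_bound k' hk
      by_cases hC0 : Cc k' = 0
      · rw [hC0, add_zero] at hk ⊢
        exact hA_bound (k'+1) hA0
      · have hmin := hν.map_add (A (k'+1)) (Cc k') hA0 hC0 hk
        have h1 := hA_bound (k'+1) hA0
        have h2 := hC_bound k' hC0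
        rw [nu_mul_pow hν hA0 hQ0] at h1
        rw [nu_mul_pow hν hC0 hQ0] at h2
        rw [nu_mul_pow hν hk hQ0]
        push_cast at h1 h2 ⊢
        rcases le_total (ν (A (k'+1))) (ν (Cc k')) with hle | hle
        · rw [min_eq_left hle] at hmin; linarith
        · rw [min_eq_right hle] at hmin; linarith

lemma truncVal_ge (hν : IsVal ν) (hQ : IsKeyPol ν Q) (m : ℕ)
    (p : Fin m → Polynomial K) (hp0 : ∀ i, p i ≠ 0)
    (hpd : ∀ i, (p i).natDegree < Q.natDegree) (e : ℕ) :
    (∑ i, ν (p i)) + (e : Γ) * ν Q ≤ truncVal ν Q ((∏ i, p i) * Q ^ e) := by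
  obtain ⟨N, d, hsum, hdeg, hval⟩ := expand_prod hν hQ m p hp0 hpd
  have hQm := hQ.1
  have hQ0 : Q ≠ 0 := hQm.ne_zero
  have hQD : 1 ≤ Q.natDegree := hQ.2.1
  set W := (∏ i, p i) * Q ^ e with hW_def
  have hprod0 : (∏ i, p i) ≠ 0 := Finset.prod_ne_zero_iff.mpr fun i _ => hp0 i
  have hW0 : W ≠ 0 := mul_ne_zero hprod0 (pow_ne_zero _ hQ0)
  set d2 : ℕ → Polynomial K := fun k => if e ≤ k then d (k - e) else 0 with hd2_def
  have hd2deg : ∀ k, d2 k ≠ 0 → (d2 k).natDegree < Q.natDegree := by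
    intro k hk
    by_cases h : e ≤ k
    · simp only [hd2_def, if_pos h] at hk ⊢; exact hdeg _ hk
    · simp [hd2_def, h] at hk
  have hWsum : W = ∑ k ∈ Finset.range (e + N), d2 k * Q ^ k := by
    rw [hW_def, hsum, Finset.sum_mul, Finset.sum_range_add]
    have h1 : ∑ k ∈ Finset.range e, d2 k * Q ^ k = 0 :=
      Finset.sum_eq_zero fun k hk => by
        have : ¬ e ≤ k := by have := Finset.mem_range.mp hk; omega
        simp [hd2_def, this]
    rw [h1, zero_add]
    exact Finset.sum_congr rfl fun k _ => by
      simp only [hd2_def, if_pos (Nat.le_add_right e k), Nat.add_sub_cancel_left]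
      rw [pow_add]; ring
  have hqc : ∀ k, qCoeff Q W k = if k < e + N then d2 k else 0 :=
    fun k => qCoeff_eq hQm k (e + N) d2 W hd2deg hWsum
  obtain ⟨k0, hk0N, hk0⟩ : ∃ k, k < N ∧ d k ≠ 0 := by
    by_contra hc
    push_neg at hc
    apply hprod0
    rw [hsum]
    exact Finset.sum_eq_zero fun k hk => by
      rw [hc k (Finset.mem_range.mp hk), zero_mul]
  have hqck0 : qCoeff Q W (e + k0) ≠ 0 := by
    rw [hqc]
    simp only [if_pos (by omega : e + k0 < e + N)]
    simpa [hd2_def, Nat.le_add_right, Nat.add_sub_cancel_left] using hk0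
  have hne : ((Finset.range (W.natDegree + 1)).filter
      fun i => qCoeff Q W i ≠ 0).Nonempty := by
    refine ⟨e + k0, Finset.mem_filter.mpr ⟨Finset.mem_range.mpr ?_, hqck0⟩⟩
    have := qCoeff_le_natDegree hQm hQD hqck0
    omega
  rw [truncVal, dif_pos hne]
  apply Finset.le_inf'
  intro i hi
  have hine : qCoeff Q W i ≠ 0 := (Finset.mem_filter.mp hi).2
  rw [hqc i] at hine ⊢
  by_cases hiN : i < e + N
  · rw [if_pos hiN] at hine ⊢
    have hei : e ≤ i := by
      by_contra hc; simp [hd2_def, hc] at hine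
    have heq : d2 i = d (i - e) := by simp [hd2_def, hei]
    rw [heq] at hine ⊢
    have h1 := hval (i - e) hine
    rw [nu_mul_pow hν hine hQ0] at h1 ⊢
    have hcast : ((i - e : ℕ) : Γ) = (i : Γ) - (e : Γ) := by
      push_cast [hei]; ring
    rw [hcast] at h1
    linarith
  · rw [if_neg hiN] at hine
    exact absurd rfl hine

end KeyPolAux
variable {K : Type*} [Field K] {Γ : Type*} [Field Γ] [LinearOrder Γ] [IsStrictOrderedRing Γ]

open KeyPolAux

/-- For a key polynomial `Q`, `h` with `deg h < deg Q`, and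
`T = ∂_{b₀}h ⬝ (Π_{i=1}^r ∂_{b_i}Q) ⬝ Q^{n-r}` with `b₀ + b₁ + ⋯ + b_r = b`,
one has `ν_Q(T) ≥ ν(h Q^n) - b ε(Q)`, with strict inequality if `b₀ > 0` or
some `b_i ∉ I(Q)`. -/
theorem truncVal_T_ge (ν : Polynomial K → Γ) (hν : IsVal ν)
    (Q : Polynomial K) (hQ : IsKeyPol ν Q) (h : Polynomial K) (hh : h ≠ 0)
    (hdeg : h.natDegree < Q.natDegree) (n r : ℕ) (hrn : r ≤ n)
    (b0 : ℕ) (bs : Fin r → ℕ) (hbs : ∀ i, 1 ≤ bs i) (b : ℕ)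
    (hb : b0 + ∑ i, bs i = b)
    (hT : Polynomial.hasseDeriv b0 h *
      (∏ i, Polynomial.hasseDeriv (bs i) Q) * Q ^ (n - r) ≠ 0) :
    ν (h * Q ^ n) - (b : Γ) * eps ν Q ≤
      truncVal ν Q (Polynomial.hasseDeriv b0 h *
        (∏ i, Polynomial.hasseDeriv (bs i) Q) * Q ^ (n - r)) ∧
    ((0 < b0 ∨ ∃ i, bs i ∉ Iset ν Q) →
      ν (h * Q ^ n) - (b : Γ) * eps ν Q <
        truncVal ν Q (Polynomial.hasseDeriv b0 h *
          (∏ i, Polynomial.hasseDeriv (bs i) Q) * Q ^ (n - r))) := by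
  have hQm := hQ.1
  have hQ0 : Q ≠ 0 := hQm.ne_zero
  have hQD : 1 ≤ Q.natDegree := hQ.2.1
  set D0 := Polynomial.hasseDeriv b0 h with hD0_def
  have hD0 : D0 ≠ 0 := left_ne_zero_of_mul (left_ne_zero_of_mul hT)
  have hprodne : (∏ i, Polynomial.hasseDeriv (bs i) Q) ≠ 0 :=
    right_ne_zero_of_mul (left_ne_zero_of_mul hT)
  have hDi : ∀ i, Polynomial.hasseDeriv (bs i) Q ≠ 0 := fun i =>
    Finset.prod_ne_zero_iff.mp hprodne i (Finset.mem_univ i)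
  set p : Fin (r+1) → Polynomial K :=
    Fin.cons D0 (fun i => Polynomial.hasseDeriv (bs i) Q) with hp_def
  have hp0 : ∀ i, p i ≠ 0 := by
    intro i
    refine Fin.cases ?_ ?_ i
    · simpa [hp_def] using hD0
    · intro j; simpa [hp_def] using hDi j
  have hpd : ∀ i, (p i).natDegree < Q.natDegree := by
    intro i
    refine Fin.cases ?_ ?_ i
    · simp only [hp_def, Fin.cons_zero, hD0_def]
      exact lt_of_le_of_lt
        (le_trans (Polynomial.natDegree_hasseDeriv_le h b0) (Nat.sub_le _ _)) hdeg
    · intro j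
      simp only [hp_def, Fin.cons_succ]
      have h1 := Polynomial.natDegree_hasseDeriv_le Q (bs j)
      have h2 := hbs j
      omega
  have hprodeq : (∏ i, p i) = D0 * ∏ i, Polynomial.hasseDeriv (bs i) Q := by
    rw [Fin.prod_univ_succ]
    simp [hp_def]
  have htrunc := truncVal_ge hν hQ (r+1) p hp0 hpd (n - r)
  rw [hprodeq] at htrunc
  have hsump : (∑ i, ν (p i)) =
      ν D0 + ∑ i : Fin r, ν (Polynomial.hasseDeriv (bs i) Q) := by
    rw [Fin.sum_univ_succ]
    simp [hp_def]
  rw [hsump] at htrunc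
  set e := eps ν Q with he_def
  have hB0 := hasse_ge_small hQ hdeg (hD0_def ▸ hD0)
  rw [← hD0_def, ← he_def] at hB0
  have hBi : ∀ i, ν Q - (bs i : Γ) * e ≤ ν (Polynomial.hasseDeriv (bs i) Q) :=
    fun i => hasse_ge ν (hDi i)
  have hsumBi : ∑ i : Fin r, (ν Q - (bs i : Γ) * e) ≤
      ∑ i : Fin r, ν (Polynomial.hasseDeriv (bs i) Q) :=
    Finset.sum_le_sum fun i _ => hBi i
  have hsumcalc : ∑ i : Fin r, (ν Q - (bs i : Γ) * e) =
      (r : Γ) * ν Q - ((∑ i, bs i : ℕ) : Γ) * e := by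
    rw [Finset.sum_sub_distrib]
    congr 1
    · rw [Finset.sum_const, Finset.card_univ, Fintype.card_fin, nsmul_eq_mul]
    · rw [← Finset.sum_mul, Nat.cast_sum]
  have hνhQ : ν (h * Q ^ n) = ν h + (n : Γ) * ν Q := nu_mul_pow hν hh hQ0 n
  have hcastnr : ((n - r : ℕ) : Γ) = (n : Γ) - (r : Γ) := by
    push_cast [hrn]; ring
  have hcastb : (b : Γ) = (b0 : Γ) + ((∑ i, bs i : ℕ) : Γ) := by
    rw [← hb]; push_cast; ring
  rw [hcastnr] at htrunc
  constructor
  · refine le_trans ?_ htrunc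
    have h0 := hB0.1
    have hs := hsumcalc ▸ hsumBi
    rw [hνhQ, hcastb]
    linarith
  · intro hstrict
    refine lt_of_lt_of_le ?_ htrunc
    rw [hνhQ, hcastb]
    rcases hstrict with hb0pos | ⟨i0, hi0⟩
    · have h0 := hB0.2 hb0pos
      have hs := hsumcalc ▸ hsumBi
      linarith
    · have h0 := hB0.1
      have hslt : ∑ i : Fin r, (ν Q - (bs i : Γ) * e) <
          ∑ i : Fin r, ν (Polynomial.hasseDeriv (bs i) Q) :=
        Finset.sum_lt_sum (fun i _ => hBi i)
          ⟨i0, Finset.mem_univ i0, hasse_Q_notI hQ (hbs i0) (hDi i0) hi0⟩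
      have hs := hsumcalc ▸ hslt
      linarith
end
end
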